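/- arXiv:1108.6272 — 5 statements merged into one kernel-verified Lean document; each statement's English description precedes it below -/
import Mathlib

section
/- Let σ > 0 and let g : ℝ → ℂ be a Schwartz function whose Fourier transform ĝ has support contained in the open interval (−σ, σ). Then 2·ĝ(0) − g(0) = 2·∫_{−∞}^{∞} g(y)·(1 − sin(2πσy)/(2πy)) dy, where the integrand is interpreted by its limiting value 1 − σ·g(0)-factor at y = 0 (i.e. sin(2πσy)/(2πy) is extended continuously by the value σ at y = 0). -/
open MeasureTheory FourierTransform Real Complex

lemma exp_sub_exp_sin (z : ℂ) :
    Complex.exp (-z * Complex.I) - Complex.exp (z * Complex.I) =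
      -2 * Complex.sin z * Complex.I := by
  rw [Complex.exp_mul_I, Complex.exp_mul_I, Complex.sin_neg, Complex.cos_neg]
  ring

lemma innerL_flip : (innerₗ ℝ).flip = innerₗ ℝ :=
  LinearMap.ext fun x => LinearMap.ext fun y => by
    rw [LinearMap.flip_apply, innerₗ_apply_apply, innerₗ_apply_apply]
    exact real_inner_comm x y

/-- If `g` is a Schwartz function on `ℝ` whose Fourier transform is
supported in `(-σ, σ)`, then `2·ĝ(0) − g(0) = 2·∫ g(y)·(1 − sin(2πσy)/(2πy)) dy`,
where `sin(2πσy)/(2πy)` is extended by its limiting value `σ` at `y = 0`. -/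
theorem two_ghat_zero_sub_g_zero (σ : ℝ) (hσ : 0 < σ) (g : SchwartzMap ℝ ℂ)
    (hsupp : Function.support (FourierTransform.fourier (g : ℝ → ℂ)) ⊆ Set.Ioo (-σ) σ) :
    2 * FourierTransform.fourier (g : ℝ → ℂ) 0 - g 0 =
      2 * ∫ y : ℝ, g y *
        (1 - ((if y = 0 then σ
               else Real.sin (2 * Real.pi * σ * y) / (2 * Real.pi * y) : ℝ) : ℂ)) := by
  classical
  set K : ℝ → ℂ := fun y => ((if y = 0 then σ
      else Real.sin (2 * Real.pi * σ * y) / (2 * Real.pi * y) : ℝ) : ℂ) with hKdef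
  set h : ℝ → ℂ := Set.indicator (Set.Ioo (-σ) σ) (fun _ => 1) with hhdef
  have hmeas : MeasurableSet (Set.Ioo (-σ : ℝ) σ) := measurableSet_Ioo
  have hInt : Integrable h := by
    rw [hhdef, integrable_indicator_iff hmeas]
    exact integrableOn_const measure_Ioo_lt_top.ne
  have hg_int : Integrable (g : ℝ → ℂ) := g.integrable
  have hFg_int : Integrable (𝓕 (g : ℝ → ℂ)) := by
    have h1 : ⇑(SchwartzMap.fourierTransformCLM ℂ g) = 𝓕 (g : ℝ → ℂ) := rfl
    rw [← h1]
    exact (SchwartzMap.fourierTransformCLM ℂ g).integrable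
  have hLcont : Continuous fun p : ℝ × ℝ => (innerₗ ℝ) p.1 p.2 := continuous_inner
  -- Fourier transform of the indicator equals `2 * K`
  have hFh : ∀ y : ℝ, 𝓕 h y = 2 * K y := by
    intro y
    have h1 : 𝓕 h y = ∫ v in Set.Ioo (-σ) σ,
        Complex.exp ((↑(-2 * π * v * y) : ℂ) * Complex.I) := by
      rw [Real.fourier_real_eq_integral_exp_smul, ← integral_indicator hmeas]
      congr 1
      ext v
      by_cases hv : v ∈ Set.Ioo (-σ) σ <;> simp [hhdef, hv]
    by_cases hy : y = 0
    · subst hy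
      simp only [hKdef, if_pos rfl, h1, mul_zero, Complex.ofReal_zero]
      rw [setIntegral_congr_fun hmeas (g := fun _ => (1 : ℂ))
        (by intro v _; simp), setIntegral_const]
      rw [Real.volume_real_Ioo_of_le (by linarith), Complex.real_smul]
      push_cast
      ring
    · have hπ : (π : ℝ) ≠ 0 := Real.pi_ne_zero
      have hπy : (2 : ℝ) * π * y ≠ 0 := by
        simp [hy, hπ]
      have hc : ((2 : ℂ) * (π : ℂ) * (y : ℂ)) * Complex.I ≠ 0 := by
        simp [Complex.I_ne_zero, hy, Complex.ofReal_ne_zero.2 hπ]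
      set c : ℂ := -(((2 : ℂ) * (π : ℂ) * (y : ℂ)) * Complex.I) with hcdef
      have hc0 : c ≠ 0 := neg_ne_zero.2 hc
      have h2 : (∫ v in Set.Ioo (-σ) σ,
          Complex.exp ((↑(-2 * π * v * y) : ℂ) * Complex.I))
          = ∫ v in (-σ : ℝ)..σ, Complex.exp (c * v) := by
        rw [intervalIntegral.integral_of_le (by linarith), integral_Ioc_eq_integral_Ioo]
        congr 1
        ext v
        congr 1
        push_cast
        ring
      rw [h1, h2, integral_exp_mul_complex hc0]
      have hθ1 : c * (σ : ℂ) = -(((2 * π * σ * y : ℝ) : ℂ)) * Complex.I := by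
        rw [hcdef]; push_cast; ring
      have hθ2 : c * (-(σ : ℂ)) = ((2 * π * σ * y : ℝ) : ℂ) * Complex.I := by
        rw [hcdef]; push_cast; ring
      have : Complex.exp (c * (σ : ℂ)) - Complex.exp (c * (-(σ : ℂ)))
          = -2 * Complex.sin ((2 * π * σ * y : ℝ) : ℂ) * Complex.I := by
        rw [hθ1, hθ2]
        exact exp_sub_exp_sin _
      rw [show ((-σ : ℝ) : ℂ) = -(σ : ℂ) by push_cast; ring, this, hKdef]
      simp only [if_neg hy]
      rw [Complex.ofReal_div, Complex.ofReal_sin, hcdef]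
      have hyC : (y : ℂ) ≠ 0 := Complex.ofReal_ne_zero.2 hy
      have hπC : (π : ℂ) ≠ 0 := Complex.ofReal_ne_zero.2 hπ
      push_cast
      field_simp
  -- Multiplication formula / self-adjointness
  have hflip : (∫ ξ, 𝓕 (g : ℝ → ℂ) ξ * h ξ) = ∫ x, (g x) * 𝓕 h x := by
    have := VectorFourier.integral_fourierIntegral_smul_eq_flip (L := innerₗ ℝ)
      Real.continuous_fourierChar hLcont hg_int hInt
    rw [innerL_flip] at this
    simp only [smul_eq_mul] at this; exact this
  -- `𝓕 g · h = 𝓕 g` pointwise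
  have hpoint : ∀ ξ : ℝ, 𝓕 (g : ℝ → ℂ) ξ * h ξ = 𝓕 (g : ℝ → ℂ) ξ := by
    intro ξ
    by_cases hξ : ξ ∈ Set.Ioo (-σ) σ
    · simp [hhdef, hξ]
    · have hz : FourierTransform.fourier (g : ℝ → ℂ) ξ = 0 := by
        by_contra hne
        exact hξ (hsupp hne)
      simp [hhdef, hξ, hz]
  -- Fourier inversion: `g 0 = ∫ 𝓕 g`
  have hinv : (g : ℝ → ℂ) 0 = ∫ ξ, 𝓕 (g : ℝ → ℂ) ξ := by
    have hfi := hg_int.fourierInv_fourier_eq hFg_int (g.continuous.continuousAt (x := 0))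
    rw [← hfi, Real.fourierInv_eq]
    simp
  -- `𝓕 g 0 = ∫ g`
  have hF0 : 𝓕 (g : ℝ → ℂ) 0 = ∫ x, (g : ℝ → ℂ) x := by
    rw [Real.fourier_real_eq]
    simp
  -- key identity: ∫ g · 𝓕 h = g 0
  have hkey : (∫ x, (g x) * 𝓕 h x) = (g : ℝ → ℂ) 0 := by
    rw [← hflip, hinv]
    exact integral_congr_ae (Filter.Eventually.of_forall hpoint)
  -- integrability of g * 𝓕 h
  have hFh_cont : Continuous (𝓕 h) :=
    VectorFourier.fourierIntegral_continuous Real.continuous_fourierChar hLcont hInt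
  have hFh_bdd : ∀ x, ‖𝓕 h x‖ ≤ ∫ v, ‖h v‖ := fun x =>
    VectorFourier.norm_fourierIntegral_le_integral_norm _ _ _ _ _
  have hgFh_int : Integrable (fun x => (g x) * 𝓕 h x) := by
    have : Integrable (fun x => 𝓕 h x * (g x)) :=
      hg_int.bdd_mul hFh_cont.aestronglyMeasurable (Filter.Eventually.of_forall hFh_bdd)
    simpa [mul_comm] using this
  -- rewrite the right-hand side
  have hRHS : (∫ y : ℝ, g y * (1 - K y))
      = (∫ x, (g : ℝ → ℂ) x) - (∫ x, (g x) * 𝓕 h x) / 2 := by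
    have heq : ∀ y : ℝ, g y * (1 - K y) = (g : ℝ → ℂ) y - (g y * 𝓕 h y) / 2 := by
      intro y
      rw [hFh y]
      ring
    rw [integral_congr_ae (Filter.Eventually.of_forall heq),
      integral_sub hg_int (hgFh_int.div_const 2), integral_div]
  show 2 * 𝓕 (g : ℝ → ℂ) 0 - (g : ℝ → ℂ) 0 = 2 * ∫ y : ℝ, g y * (1 - K y)
  rw [hRHS, hkey, hF0]
  ring
end

section
/- There exists a constant C > 0 such that for every prime p and every real number X ≥ 1, the number of fundamental discriminants f with 0 < |f| ≤ X and p | f satisfies |#{f : f is a fundamental discriminant, 0 < |f| ≤ X, p | f} − 6X/(π²(p+1))| ≤ C·(X/p)^{1/2}. -/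
/-- An integer `f` is a fundamental discriminant if either `f ≡ 1 (mod 4)` and `f` is
squarefree, or `f = 4m` with `m` squarefree and `m ≡ 2` or `3 (mod 4)`. -/
def IsFundamentalDiscriminant (f : ℤ) : Prop :=
  (f % 4 = 1 ∧ Squarefree f) ∨
  (∃ m : ℤ, f = 4 * m ∧ Squarefree m ∧ (m % 4 = 2 ∨ m % 4 = 3))

open ArithmeticFunction Finset


open ArithmeticFunction Finset
open scoped ArithmeticFunction.Moebius ArithmeticFunction.zeta

lemma abs_moebius_real_le_one (d : ℕ) : |(μ d : ℝ)| ≤ 1 := by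
  exact_mod_cast (by exact_mod_cast ArithmeticFunction.abs_moebius_le_one :
    ((|(μ d : ℤ)| : ℤ) : ℝ) ≤ 1)

lemma abs_moebius_div_sq_le (d : ℕ) : |(μ d : ℝ) / (d:ℝ)^2| ≤ 1 / (d:ℝ)^2 := by
  rcases Nat.eq_zero_or_pos d with rfl | hd
  · simp
  · rw [abs_div, abs_of_nonneg (by positivity : (0:ℝ) ≤ (d:ℝ)^2)]
    have : (0:ℝ) < (d:ℝ)^2 := by positivity
    gcongr
    exact abs_moebius_real_le_one d

lemma summable_moebius_div_sq : Summable (fun d : ℕ => (μ d : ℝ) / (d:ℝ)^2) := by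
  apply Summable.of_abs
  exact Summable.of_nonneg_of_le (fun d => abs_nonneg _) (fun d => abs_moebius_div_sq_le d)
    (Real.summable_one_div_nat_pow.mpr one_lt_two)

lemma moebius_tsum : ∑' d : ℕ, (μ d : ℝ) / (d:ℝ)^2 = 6 / Real.pi ^ 2 := by
  have h2 : (1:ℝ) < (2:ℂ).re := by norm_num
  have hz := LSeries_zeta_mul_Lseries_moebius (s := 2) h2
  rw [LSeries_zeta_eq_riemannZeta h2, riemannZeta_two] at hz
  have hL : LSeries (fun n => ((μ n : ℤ) : ℂ)) 2 = ((∑' d : ℕ, (μ d : ℝ) / (d:ℝ)^2 : ℝ) : ℂ) := by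
    rw [Complex.ofReal_tsum]
    apply tsum_congr
    intro n
    rcases Nat.eq_zero_or_pos n with rfl | hn
    · simp [LSeries.term]
    · rw [LSeries.term_of_ne_zero hn.ne',
        show ((2:ℂ)) = ((2:ℕ):ℂ) by norm_num, Complex.cpow_natCast]
      push_cast
      ring
  rw [hL] at hz
  have hpi : (Real.pi : ℂ) ≠ 0 := by exact_mod_cast Real.pi_ne_zero
  have h6 : ((∑' d : ℕ, (μ d : ℝ) / (d:ℝ)^2 : ℝ) : ℂ) = 6 / (Real.pi:ℂ) ^ 2 := by
    field_simp at hz ⊢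
    linear_combination hz
  exact_mod_cast h6

lemma moebius_partial (K : ℕ) :
    |∑ d ∈ Finset.range (K+1), (μ d : ℝ) / (d:ℝ)^2 - 6 / Real.pi ^ 2| ≤ 2 / ((K:ℝ)+1) := by
  have hsum := summable_moebius_div_sq
  set T : ℕ → ℝ := fun i => (μ (i + (K+1)) : ℝ) / ((i + (K+1) : ℕ):ℝ)^2 with hT
  have hdecomp : ∑ d ∈ Finset.range (K+1), (μ d : ℝ) / (d:ℝ)^2 + ∑' i : ℕ, T i
      = ∑' d : ℕ, (μ d : ℝ) / (d:ℝ)^2 := Summable.sum_add_tsum_nat_add (K+1) hsum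
  rw [← moebius_tsum, ← hdecomp, sub_add_cancel_left, abs_neg]
  have hTsum : Summable T := hsum.comp_injective (add_left_injective (K+1))
  set u : ℕ → ℝ := fun n => (((n:ℕ):ℝ)^2)⁻¹ with hu
  have husum : Summable u := by
    have := Real.summable_one_div_nat_pow (p := 2) |>.mpr one_lt_two
    simpa [hu, one_div] using this
  have huK : Summable (fun i : ℕ => u (i + (K+1))) :=
    husum.comp_injective (add_left_injective (K+1))
  have h1 : |∑' i : ℕ, T i| ≤ ∑' i : ℕ, |T i| := by
    have := norm_tsum_le_tsum_norm (f := T) (by simpa [Real.norm_eq_abs] using hTsum.abs)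
    simpa [Real.norm_eq_abs] using this
  have h2 : ∑' i : ℕ, |T i| ≤ ∑' i : ℕ, u (i + (K+1)) := by
    refine Summable.tsum_le_tsum (fun i => ?_) hTsum.abs huK
    simpa [hT, hu, one_div] using abs_moebius_div_sq_le (i + (K+1))
  have h3 : ∑' i : ℕ, u (i + (K+1)) ≤ 2 / ((K:ℝ)+1) := by
    apply Summable.tsum_le_of_sum_range_le huK
    intro M
    have heq : ∑ i ∈ Finset.range M, u (i + (K+1))
        = ∑ i ∈ Finset.Ioo K (K+1+M), ((i:ℝ)^2)⁻¹ := by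
      rw [← Finset.Ico_add_one_left_eq_Ioo, Finset.sum_Ico_eq_sum_range]
      simp only [Nat.add_sub_cancel_left]
      exact Finset.sum_congr rfl fun i _ => by rw [add_comm (K+1) i]
    rw [heq]
    have := sum_Ioo_inv_sq_le (α := ℝ) K (K+1+M)
    exact_mod_cast this
  linarith


-- d^2 ∣ n ↔ d ∣ b  where n = b^2 * a, a squarefree
lemma sq_dvd_iff {n a b d : ℕ} (hn : n ≠ 0) (h : b^2 * a = n) (ha : Squarefree a)
    (hd : d ≠ 0) : d^2 ∣ n ↔ d ∣ b := by
  have hb : b ≠ 0 := by rintro rfl; simp at h; omega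
  have ha0 : a ≠ 0 := ha.ne_zero
  constructor
  · intro hdvd
    rw [← Nat.factorization_le_iff_dvd hd hb]
    rw [← Nat.factorization_le_iff_dvd (pow_ne_zero 2 hd) hn] at hdvd
    intro q
    have h1 := hdvd q
    rw [← h, Nat.factorization_mul (pow_ne_zero 2 hb) ha0, Nat.factorization_pow,
      Nat.factorization_pow] at h1
    have h2 : a.factorization q ≤ 1 := (Nat.squarefree_iff_factorization_le_one ha0).mp ha q
    simp only [Finsupp.coe_add, Finsupp.coe_smul, Pi.add_apply, Pi.smul_apply,
      smul_eq_mul] at h1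
    omega
  · intro hdvd
    exact dvd_trans (pow_dvd_pow_of_dvd hdvd 2) (h ▸ Dvd.intro a rfl)

lemma moebius_indicator {N n : ℕ} (h1 : 1 ≤ n) (h2 : n ≤ N) :
    ∑ d ∈ Finset.Icc 1 N, (if d^2 ∣ n then μ d else 0)
      = if Squarefree n then 1 else 0 := by
  obtain ⟨a, b, hab, ha⟩ := Nat.sq_mul_squarefree n
  have hn : n ≠ 0 := by omega
  have hb : b ≠ 0 := by rintro rfl; simp at hab; omega
  have hfil : Finset.filter (fun d => d^2 ∣ n) (Finset.Icc 1 N) = b.divisors := by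
    ext d
    simp only [Finset.mem_filter, Finset.mem_Icc, Nat.mem_divisors]
    constructor
    · rintro ⟨⟨hd1, _⟩, hdvd⟩
      exact ⟨(sq_dvd_iff hn hab ha (by omega)).mp hdvd, hb⟩
    · rintro ⟨hdb, -⟩
      have hd0 : d ≠ 0 := by rintro rfl; exact hb (Nat.eq_zero_of_zero_dvd hdb)
      have hbn : b ∣ n := dvd_trans (Dvd.intro b rfl) (hab ▸ Dvd.intro a (by ring))
      have hdN : d ≤ N := le_trans (Nat.le_of_dvd (Nat.pos_of_ne_zero hb) hdb)
        (le_trans (Nat.le_of_dvd (by omega) hbn) h2)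
      exact ⟨⟨by omega, hdN⟩, (sq_dvd_iff hn hab ha hd0).mpr hdb⟩
  rw [← Finset.sum_filter, hfil]
  have hsum : ∑ d ∈ b.divisors, μ d = (μ * (ζ : ArithmeticFunction ℤ)) b :=
    (coe_mul_zeta_apply).symm
  rw [hsum, moebius_mul_coe_zeta, one_apply]
  congr 1
  have : b = 1 ↔ Squarefree n := by
    constructor
    · rintro rfl; rw [← hab]; simpa using ha
    · intro hsf
      have : b * b ∣ n := by rw [← hab]; ring_nf; exact Dvd.intro a (by ring)
      exact Nat.isUnit_iff.mp (hsf b this)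
  simp [this]

lemma Qid (N : ℕ) :
    (((Finset.Icc 1 N).filter (fun n => Squarefree n)).card : ℤ)
      = ∑ d ∈ Finset.Icc 1 N, μ d * (N / d^2 : ℕ) := by
  rw [Finset.card_filter]
  push_cast
  calc (∑ n ∈ Finset.Icc 1 N, if Squarefree n then (1:ℤ) else 0)
      = ∑ n ∈ Finset.Icc 1 N, ∑ d ∈ Finset.Icc 1 N, (if d^2 ∣ n then μ d else 0) := by
        refine Finset.sum_congr rfl fun n hn => ?_
        rw [Finset.mem_Icc] at hn
        exact (moebius_indicator hn.1 hn.2).symm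
    _ = ∑ d ∈ Finset.Icc 1 N, ∑ n ∈ Finset.Icc 1 N, (if d^2 ∣ n then μ d else 0) :=
        Finset.sum_comm
    _ = ∑ d ∈ Finset.Icc 1 N, μ d * (N / d^2 : ℕ) := by
        refine Finset.sum_congr rfl fun d _ => ?_
        rw [← Finset.sum_filter, Finset.sum_const,
          show Finset.Icc 1 N = Finset.Ioc 0 N from by rw [← Finset.Icc_add_one_left_eq_Ioc, zero_add],
          Nat.Ioc_filter_dvd_card_eq_div N (d^2), nsmul_eq_mul]
        push_cast
        ring



open scoped Classical in
noncomputable def fdset (P : ℕ → Prop) (Z : ℝ) : Finset ℕ :=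
  (Finset.Icc 1 ⌊Z⌋₊).filter P

noncomputable def cnt (P : ℕ → Prop) (Z : ℝ) : ℕ := (fdset P Z).card

lemma mem_fdset {P : ℕ → Prop} {Z : ℝ} {n : ℕ} :
    n ∈ fdset P Z ↔ (1 ≤ n ∧ n ≤ ⌊Z⌋₊) ∧ P n := by
  classical
  simp [fdset, Finset.mem_filter, Finset.mem_Icc]

lemma cnt_zero {P : ℕ → Prop} {Z : ℝ} (h : Z < 1) : cnt P Z = 0 := by
  classical
  have : ⌊Z⌋₊ = 0 := by
    rcases le_or_gt 0 Z with h0 | h0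
    · exact Nat.floor_eq_zero.mpr h
    · exact Nat.floor_of_nonpos h0.le
  rw [cnt, fdset, this]
  simp

lemma pi_sq_gt : (6:ℝ) < Real.pi ^ 2 := by
  nlinarith [Real.pi_gt_three]

lemma six_div_pi_sq_le_one : 6 / Real.pi ^ 2 ≤ 1 := by
  rw [div_le_one (by positivity)]
  exact pi_sq_gt.le

lemma self_le_sqrt {Z : ℝ} (h0 : 0 ≤ Z) (h1 : Z ≤ 1) : Z ≤ Real.sqrt Z := by
  nlinarith [Real.sq_sqrt h0, Real.sqrt_le_one.mpr h1, Real.sqrt_nonneg Z]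

lemma natdiv_le {a b : ℕ} : ((a / b : ℕ) : ℝ) ≤ (a:ℝ) / (b:ℝ) := Nat.cast_div_le

lemma natdiv_ge {a b : ℕ} (hb : 0 < b) : (a:ℝ) / (b:ℝ) - 1 ≤ ((a / b : ℕ) : ℝ) := by
  have h1 : (b:ℝ) * ((a/b:ℕ):ℝ) + ((a % b : ℕ):ℝ) = a := by exact_mod_cast Nat.div_add_mod a b
  have h2 : ((a % b : ℕ):ℝ) < b := by exact_mod_cast Nat.mod_lt a hb
  have hb' : (0:ℝ) < b := by exact_mod_cast hb
  rw [sub_le_iff_le_add, div_le_iff₀ hb']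
  nlinarith

lemma E0 (Z : ℝ) (hZ : 0 ≤ Z) :
    |(cnt Squarefree Z : ℝ) - 6 / Real.pi ^ 2 * Z| ≤ 4 * Real.sqrt Z := by
  classical
  set N := ⌊Z⌋₊ with hN
  rcases Nat.eq_zero_or_pos N with hN0 | hN1
  · have hz1 : Z < 1 := by
      by_contra hc
      push_neg at hc
      have : 1 ≤ N := Nat.le_floor (by exact_mod_cast hc)
      omega
    rw [cnt_zero hz1]
    simp only [Nat.cast_zero, zero_sub, abs_neg]
    rw [abs_of_nonneg (by positivity)]
    have h1 : 6 / Real.pi ^ 2 * Z ≤ Z := by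
      nlinarith [six_div_pi_sq_le_one, hZ]
    have h2 := self_le_sqrt hZ hz1.le
    nlinarith [Real.sqrt_nonneg Z]
  have hZ1 : 1 ≤ Z := by
    by_contra hc; push_neg at hc
    have := Nat.floor_eq_zero.mpr hc; omega
  set K := N.sqrt with hK
  have hK1 : 1 ≤ K := by
    have := Nat.sqrt_pos.mpr hN1; omega
  have hsub : Finset.Icc 1 K ⊆ Finset.Icc 1 N :=
    Finset.Icc_subset_Icc le_rfl (Nat.sqrt_le_self N)
  have hA : ((cnt Squarefree Z : ℕ) : ℤ) = ∑ d ∈ Finset.Icc 1 K, μ d * (N / d^2 : ℕ) := by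
    rw [cnt]
    have hfd : fdset Squarefree Z = (Finset.Icc 1 N).filter (fun n => Squarefree n) := by
      simp only [fdset, ← hN]
      exact Finset.filter_congr_decidable _ _ _
    rw [hfd, Qid N, Finset.sum_subset hsub]
    intro d hd hd'
    rw [Finset.mem_Icc] at hd hd'
    have hdK : K < d := by omega
    have : N < d^2 := Nat.sqrt_lt'.mp hdK
    rw [Nat.div_eq_of_lt this]
    simp
  have hAr : (cnt Squarefree Z : ℝ) = ∑ d ∈ Finset.Icc 1 K, (μ d : ℝ) * ((N / d^2 : ℕ) : ℝ) := by
    have := congrArg (fun z : ℤ => (z:ℝ)) hA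
    simp only [Int.cast_sum, Int.cast_mul, Int.cast_natCast] at this
    exact this
  -- Step B
  have hB : |(cnt Squarefree Z : ℝ) - ∑ d ∈ Finset.Icc 1 K, (μ d : ℝ) * ((N:ℝ) / (d:ℝ)^2)|
      ≤ (K:ℝ) := by
    rw [hAr, ← Finset.sum_sub_distrib]
    calc |∑ d ∈ Finset.Icc 1 K, ((μ d : ℝ) * ((N / d^2 : ℕ) : ℝ) - (μ d : ℝ) * ((N:ℝ)/(d:ℝ)^2))|
        ≤ ∑ d ∈ Finset.Icc 1 K, |(μ d : ℝ) * ((N / d^2 : ℕ) : ℝ) - (μ d : ℝ) * ((N:ℝ)/(d:ℝ)^2)| :=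
          Finset.abs_sum_le_sum_abs _ _
      _ ≤ ∑ _d ∈ Finset.Icc 1 K, (1:ℝ) := by
          refine Finset.sum_le_sum fun d hd => ?_
          rw [Finset.mem_Icc] at hd
          have hd2 : (0:ℕ) < d^2 := pow_pos hd.1 2
          rw [← mul_sub, abs_mul]
          have hle : ((N / d^2 : ℕ) : ℝ) ≤ (N:ℝ)/(d:ℝ)^2 := by
            have := natdiv_le (a := N) (b := d^2); push_cast at this; exact this
          have hge : (N:ℝ)/(d:ℝ)^2 - 1 ≤ ((N / d^2 : ℕ) : ℝ) := by
            have := natdiv_ge (a := N) (b := d^2) hd2; push_cast at this; exact this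
          have h1 : |((N / d^2 : ℕ) : ℝ) - (N:ℝ)/(d:ℝ)^2| ≤ 1 := by
            rw [abs_le]; constructor <;> linarith
          have h2 : |(μ d : ℝ)| ≤ 1 := by
            exact_mod_cast (by exact_mod_cast abs_moebius_le_one (n := d) :
              ((|(μ d : ℤ)| : ℤ) : ℝ) ≤ 1)
          nlinarith [abs_nonneg ((μ d : ℝ)), abs_nonneg (((N / d^2 : ℕ) : ℝ) - (N:ℝ)/(d:ℝ)^2)]
      _ = (K:ℝ) := by simp [Nat.card_Icc]
  -- Step C
  have hC : ∑ d ∈ Finset.Icc 1 K, (μ d : ℝ) * ((N:ℝ) / (d:ℝ)^2)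
      = (N:ℝ) * ∑ d ∈ Finset.range (K+1), (μ d : ℝ) / (d:ℝ)^2 := by
    calc ∑ d ∈ Finset.Icc 1 K, (μ d : ℝ) * ((N:ℝ) / (d:ℝ)^2)
        = ∑ d ∈ Finset.Icc 1 K, (N:ℝ) * ((μ d : ℝ) / (d:ℝ)^2) :=
          Finset.sum_congr rfl fun d _ => by ring
      _ = (N:ℝ) * ∑ d ∈ Finset.Icc 1 K, (μ d : ℝ) / (d:ℝ)^2 := by rw [Finset.mul_sum]
      _ = (N:ℝ) * ∑ d ∈ Finset.range (K+1), (μ d : ℝ) / (d:ℝ)^2 := by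
          congr 1
          rw [show Finset.range (K+1) = insert 0 (Finset.Icc 1 K) from by
            ext x; simp only [Finset.mem_range, Finset.mem_insert, Finset.mem_Icc]; omega]
          rw [Finset.sum_insert (by simp)]
          simp
  have hsqrtN : Real.sqrt N ≤ Real.sqrt Z := Real.sqrt_le_sqrt (Nat.floor_le hZ)
  have hKsqrt : (K:ℝ) ≤ Real.sqrt N := by
    rw [show ((K:ℕ):ℝ) = Real.sqrt ((K:ℝ)^2) from (Real.sqrt_sq (by positivity)).symm]
    apply Real.sqrt_le_sqrt
    exact_mod_cast Nat.sqrt_le' N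
  have hNsqrt_pos : (0:ℝ) < Real.sqrt N := by
    apply Real.sqrt_pos.mpr; exact_mod_cast hN1
  have hD : (N:ℝ) * (2 / ((K:ℝ)+1)) ≤ 2 * Real.sqrt N := by
    have hKN : Real.sqrt N ≤ (K:ℝ) + 1 := by
      rw [show ((K:ℝ)+1) = ((K+1 : ℕ):ℝ) from by push_cast; ring]
      rw [show ((K+1:ℕ):ℝ) = Real.sqrt (((K+1:ℕ):ℝ)^2) from (Real.sqrt_sq (by positivity)).symm]
      apply Real.sqrt_le_sqrt
      have := Nat.lt_succ_sqrt N
      have : (N:ℝ) < ((K+1:ℕ):ℝ) * ((K+1:ℕ):ℝ) := by exact_mod_cast this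
      push_cast at this ⊢
      nlinarith
    have hNeq : (N:ℝ) = Real.sqrt N * Real.sqrt N := (Real.mul_self_sqrt (by positivity)).symm
    have h2 : (N:ℝ) * 2 ≤ 2 * Real.sqrt N * ((K:ℝ)+1) := by nlinarith
    calc (N:ℝ) * (2/((K:ℝ)+1)) = (N:ℝ) * 2 / ((K:ℝ)+1) := by ring
      _ ≤ 2 * Real.sqrt N := by
          rw [div_le_iff₀ (by positivity : (0:ℝ) < (K:ℝ)+1)]
          nlinarith
  -- combine
  have hmp := moebius_partial K
  have hcomb : |(cnt Squarefree Z : ℝ) - 6 / Real.pi ^ 2 * N| ≤ 3 * Real.sqrt N := by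
    have hN0' : (0:ℝ) ≤ (N:ℝ) := by positivity
    calc |(cnt Squarefree Z : ℝ) - 6 / Real.pi ^ 2 * N|
        ≤ |(cnt Squarefree Z : ℝ) - ∑ d ∈ Finset.Icc 1 K, (μ d : ℝ) * ((N:ℝ) / (d:ℝ)^2)|
          + |∑ d ∈ Finset.Icc 1 K, (μ d : ℝ) * ((N:ℝ) / (d:ℝ)^2) - 6 / Real.pi ^ 2 * N| := by
          apply abs_sub_le
      _ ≤ (K:ℝ) + (N:ℝ) * (2 / ((K:ℝ)+1)) := by
          apply add_le_add hB
          rw [hC, show 6 / Real.pi ^ 2 * (N:ℝ) = (N:ℝ) * (6 / Real.pi^2) from by ring,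
            ← mul_sub, abs_mul, abs_of_nonneg hN0']
          apply mul_le_mul_of_nonneg_left hmp hN0'
      _ ≤ Real.sqrt N + 2 * Real.sqrt N := by
          apply add_le_add (hKsqrt.trans le_rfl) hD
      _ = 3 * Real.sqrt N := by ring
  have hZN : Z - (N:ℝ) < 1 := by
    have := Nat.lt_floor_add_one Z
    push_cast at this ⊢
    linarith
  have hZN0 : 0 ≤ Z - (N:ℝ) := by
    have := Nat.floor_le hZ
    linarith
  have hsq1 : (1:ℝ) ≤ Real.sqrt Z := by
    rw [show (1:ℝ) = Real.sqrt 1 from (Real.sqrt_one).symm]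
    exact Real.sqrt_le_sqrt hZ1
  calc |(cnt Squarefree Z : ℝ) - 6 / Real.pi ^ 2 * Z|
      ≤ |(cnt Squarefree Z : ℝ) - 6 / Real.pi ^ 2 * N| + |6 / Real.pi ^ 2 * N - 6 / Real.pi ^ 2 * Z| := by
        apply abs_sub_le
    _ ≤ 3 * Real.sqrt N + 1 := by
        apply add_le_add hcomb
        rw [← mul_sub, abs_mul, abs_of_nonneg (by positivity : (0:ℝ) ≤ 6 / Real.pi^2)]
        rw [abs_of_nonpos (by linarith), neg_sub]
        nlinarith [six_div_pi_sq_le_one]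
    _ ≤ 3 * Real.sqrt Z + Real.sqrt Z := by
        apply add_le_add (by nlinarith) hsq1
    _ = 4 * Real.sqrt Z := by ring



lemma cnt_congr {P Q : ℕ → Prop} (Z : ℝ) (h : ∀ n, 0 < n → (P n ↔ Q n)) :
    cnt P Z = cnt Q Z := by
  classical
  rw [cnt, cnt]
  congr 1
  rw [fdset, fdset]
  apply Finset.filter_congr
  intro x hx
  rw [Finset.mem_Icc] at hx
  simpa using h x (by omega)

lemma cnt_split (P R : ℕ → Prop) (Z : ℝ) :
    cnt P Z = cnt (fun n => P n ∧ R n) Z + cnt (fun n => P n ∧ ¬ R n) Z := by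
  classical
  simp only [cnt, fdset, Finset.card_filter]
  rw [← Finset.sum_add_distrib]
  apply Finset.sum_congr rfl
  intro x _
  by_cases hP : P x <;> by_cases hR : R x <;> simp [hP, hR]

lemma cnt_shift (k : ℕ) (hk : 0 < k) (P Q : ℕ → Prop)
    (h : ∀ u, 0 < u → (Q (k*u) ↔ P u)) (hdvd : ∀ n, 0 < n → Q n → k ∣ n) (Z : ℝ) :
    cnt Q Z = cnt P (Z / k) := by
  classical
  rw [cnt, cnt]
  apply Finset.card_nbij' (i := fun n => n / k) (j := fun u => k * u)
  · intro n hn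
    rw [Finset.mem_coe, mem_fdset] at hn ⊢
    obtain ⟨⟨h1, h2⟩, hQ⟩ := hn
    obtain ⟨u, rfl⟩ := hdvd n (by omega) hQ
    have hu : 0 < u := by
      rcases Nat.eq_zero_or_pos u with rfl | hu
      · simp at h1
      · exact hu
    beta_reduce
    rw [Nat.mul_div_cancel_left u hk]
    refine ⟨⟨hu, ?_⟩, (h u hu).mp hQ⟩
    rw [Nat.floor_div_natCast Z k, Nat.le_div_iff_mul_le hk, mul_comm]
    exact h2
  · intro u hu'
    rw [Finset.mem_coe, mem_fdset] at hu' ⊢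
    beta_reduce
    obtain ⟨⟨h1, h2⟩, hP⟩ := hu'
    rw [Nat.floor_div_natCast Z k, Nat.le_div_iff_mul_le hk] at h2
    refine ⟨⟨Nat.mul_pos hk h1, by rwa [mul_comm]⟩, (h u h1).mpr hP⟩
  · intro n hn
    rw [Finset.mem_coe, mem_fdset] at hn
    exact Nat.mul_div_cancel' (hdvd n (by omega) hn.2)
  · intro u _
    exact Nat.mul_div_cancel_left u hk



lemma rec_bound (k : ℕ) (hk : 2 ≤ k) (f g : ℝ → ℝ) (b C : ℝ) (hb0 : 0 ≤ b) (hb1 : b ≤ 1)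
    (hC : 1 ≤ C)
    (hrec : ∀ Z, 1 ≤ Z → f Z + f (Z/(k:ℝ)) = g Z)
    (hf0 : ∀ Z, 0 ≤ Z → Z < 1 → f Z = 0)
    (hg : ∀ Z, 0 ≤ Z → |g Z - b*(1+1/(k:ℝ))*Z| ≤ C*Real.sqrt Z) :
    ∀ Z, 0 ≤ Z → |f Z - b*Z| ≤ 4*C*Real.sqrt Z := by
  have h2pos : (0:ℝ) < Real.sqrt 2 := Real.sqrt_pos.mpr (by norm_num)
  have hs2 : (4:ℝ)/Real.sqrt 2 ≤ 3 := by
    rw [div_le_iff₀ h2pos]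
    nlinarith [Real.sq_sqrt (by norm_num : (0:ℝ) ≤ 2)]
  have hkR : (2:ℝ) ≤ (k:ℝ) := by exact_mod_cast hk
  have base : ∀ Z, 0 ≤ Z → Z < 1 → |f Z - b*Z| ≤ 4*C*Real.sqrt Z := by
    intro Z h0 h1
    rw [hf0 Z h0 h1, zero_sub, abs_neg, abs_of_nonneg (mul_nonneg hb0 h0)]
    have h2 := self_le_sqrt h0 h1.le
    nlinarith [Real.sqrt_nonneg Z]
  have main : ∀ N : ℕ, ∀ Z, 0 ≤ Z → ⌊Z⌋₊ ≤ N → |f Z - b*Z| ≤ 4*C*Real.sqrt Z := by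
    intro N
    induction N with
    | zero =>
      intro Z h0 hfl
      apply base Z h0
      by_contra hc
      push_neg at hc
      have : 1 ≤ ⌊Z⌋₊ := Nat.le_floor (by exact_mod_cast hc)
      omega
    | succ n ih =>
      intro Z h0 hfl
      rcases lt_or_ge Z 1 with h1 | h1
      · exact base Z h0 h1
      have hkpos : (0:ℝ) < (k:ℝ) := by linarith
      have hflk : ⌊Z/(k:ℝ)⌋₊ ≤ n := by
        rw [Nat.floor_div_natCast]
        have h1' : 1 ≤ ⌊Z⌋₊ := Nat.le_floor (by exact_mod_cast h1)
        have hd : ⌊Z⌋₊ / k ≤ ⌊Z⌋₊ / 2 := Nat.div_le_div_left hk two_pos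
        omega
      have ihk := ih (Z/(k:ℝ)) (by positivity) hflk
      have heq : f Z = g Z - f (Z/(k:ℝ)) := by linarith [hrec Z h1]
      have hgz := hg Z h0
      have hsk : Real.sqrt (Z/(k:ℝ)) ≤ Real.sqrt Z / Real.sqrt 2 := by
        rw [Real.sqrt_div h0]
        gcongr
      have hCZ : (0:ℝ) ≤ C * Real.sqrt Z := by positivity
      calc |f Z - b*Z| = |(g Z - b*(1+1/(k:ℝ))*Z) - (f (Z/(k:ℝ)) - b*(Z/(k:ℝ)))| := by
            rw [heq]; congr 1; ring
        _ ≤ |g Z - b*(1+1/(k:ℝ))*Z| + |f (Z/(k:ℝ)) - b*(Z/(k:ℝ))| := abs_sub _ _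
        _ ≤ C*Real.sqrt Z + 4*C*Real.sqrt (Z/(k:ℝ)) := add_le_add hgz ihk
        _ ≤ C*Real.sqrt Z + 4*C*(Real.sqrt Z / Real.sqrt 2) :=
            add_le_add le_rfl (mul_le_mul_of_nonneg_left hsk (by linarith))
        _ = C*Real.sqrt Z + (4/Real.sqrt 2)*(C*Real.sqrt Z) := by ring
        _ ≤ C*Real.sqrt Z + 3*(C*Real.sqrt Z) := by nlinarith
        _ = 4*C*Real.sqrt Z := by ring
  intro Z h0
  exact main ⌊Z⌋₊ Z h0 le_rfl

lemma squarefree_prime_mul {p : ℕ} (hp : p.Prime) (u : ℕ) :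
    Squarefree (p * u) ↔ ¬ p ∣ u ∧ Squarefree u := by
  rw [Nat.squarefree_mul_iff, Nat.Prime.coprime_iff_not_dvd hp]
  exact ⟨fun ⟨h1, _, h2⟩ => ⟨h1, h2⟩, fun ⟨h1, h2⟩ => ⟨h1, hp.squarefree, h2⟩⟩

lemma E1 (Z : ℝ) (hZ : 0 ≤ Z) :
    |(cnt (fun n => Squarefree n ∧ ¬ 2 ∣ n) Z : ℝ) - 4 / Real.pi ^ 2 * Z|
      ≤ 16 * Real.sqrt Z := by
  have hπ : (0:ℝ) < Real.pi ^ 2 := by positivity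
  have h := rec_bound 2 le_rfl
    (fun Z => (cnt (fun n => Squarefree n ∧ ¬ 2 ∣ n) Z : ℝ))
    (fun Z => (cnt Squarefree Z : ℝ))
    (4 / Real.pi ^ 2) 4
    (by positivity)
    (by rw [div_le_one hπ]; nlinarith [pi_sq_gt])
    (by norm_num)
    ?_ (fun Z _ h1 => by
      show ((cnt (fun n => Squarefree n ∧ ¬ 2 ∣ n) Z : ℕ) : ℝ) = 0
      rw [cnt_zero h1]; simp) ?_ Z hZ
  · calc |(cnt (fun n => Squarefree n ∧ ¬ 2 ∣ n) Z : ℝ) - 4 / Real.pi ^ 2 * Z|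
        ≤ 4*4*Real.sqrt Z := h
      _ = 16 * Real.sqrt Z := by ring
  · intro Y hY
    have hsplit := cnt_split Squarefree (fun n => 2 ∣ n) Y
    have hshift := cnt_shift 2 two_pos
      (fun u => Squarefree u ∧ ¬ 2 ∣ u) (fun n => Squarefree n ∧ 2 ∣ n)
      (fun u hu => by
        show Squarefree (2*u) ∧ 2 ∣ 2*u ↔ Squarefree u ∧ ¬ 2 ∣ u
        rw [squarefree_prime_mul Nat.prime_two]
        simp only [dvd_mul_right, and_true]
        tauto)
      (fun n _ hn => hn.2) Y
    rw [hshift] at hsplit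
    rw [show ((2:ℕ):ℝ) = (2:ℝ) from by norm_num] at hsplit
    push_cast [hsplit]
    ring_nf
  · intro Y hY
    have := E0 Y hY
    have heq : 4 / Real.pi ^ 2 * (1 + 1/((2:ℕ):ℝ)) = 6 / Real.pi ^ 2 := by
      push_cast
      field_simp
      ring
    rw [heq]
    exact this

lemma E3 {p : ℕ} (hp : p.Prime) (hp2 : p ≠ 2) (Z : ℝ) (hZ : 0 ≤ Z) :
    |(cnt (fun n => (Squarefree n ∧ ¬ 2 ∣ n) ∧ ¬ p ∣ n) Z : ℝ)
        - (4 / Real.pi ^ 2 * ((p:ℝ)/((p:ℝ)+1))) * Z| ≤ 64 * Real.sqrt Z := by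
  have hπ : (0:ℝ) < Real.pi ^ 2 := by positivity
  have hppos : (0:ℝ) < (p:ℝ) := by exact_mod_cast hp.pos
  have hp1 : (0:ℝ) < (p:ℝ) + 1 := by linarith
  have hndvd2 : ¬ 2 ∣ p := fun hd =>
    hp2 ((Nat.prime_dvd_prime_iff_eq Nat.prime_two hp).mp hd).symm
  have h := rec_bound p hp.two_le
    (fun Z => (cnt (fun n => (Squarefree n ∧ ¬ 2 ∣ n) ∧ ¬ p ∣ n) Z : ℝ))
    (fun Z => (cnt (fun n => Squarefree n ∧ ¬ 2 ∣ n) Z : ℝ))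
    (4 / Real.pi ^ 2 * ((p:ℝ)/((p:ℝ)+1))) 16
    (by positivity)
    (by
      have h1 : (p:ℝ)/((p:ℝ)+1) ≤ 1 := by rw [div_le_one hp1]; linarith
      have h2 : 4 / Real.pi ^ 2 ≤ 1 := by rw [div_le_one hπ]; nlinarith [pi_sq_gt]
      calc 4 / Real.pi ^ 2 * ((p:ℝ)/((p:ℝ)+1)) ≤ 1 * 1 := by
            apply mul_le_mul h2 h1 (by positivity) (by norm_num)
        _ = 1 := by norm_num)
    (by norm_num)
    ?_ (fun Z _ h1 => by
      show ((cnt (fun n => (Squarefree n ∧ ¬ 2 ∣ n) ∧ ¬ p ∣ n) Z : ℕ) : ℝ) = 0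
      rw [cnt_zero h1]; simp) ?_ Z hZ
  · calc _ ≤ 4*16*Real.sqrt Z := h
      _ = 64 * Real.sqrt Z := by ring
  · intro Y hY
    have hsplit := cnt_split (fun n => Squarefree n ∧ ¬ 2 ∣ n) (fun n => p ∣ n) Y
    have hshift := cnt_shift p hp.pos
      (fun u => (Squarefree u ∧ ¬ 2 ∣ u) ∧ ¬ p ∣ u)
      (fun n => (Squarefree n ∧ ¬ 2 ∣ n) ∧ p ∣ n)
      (fun u hu => by
        show (Squarefree (p*u) ∧ ¬ 2 ∣ p*u) ∧ p ∣ p*u ↔ (Squarefree u ∧ ¬ 2 ∣ u) ∧ ¬ p ∣ u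
        rw [squarefree_prime_mul hp]
        have h2 : 2 ∣ p * u ↔ 2 ∣ u := by
          rw [Nat.Prime.dvd_mul Nat.prime_two]
          tauto
        simp only [dvd_mul_right, and_true, h2]
        tauto)
      (fun n _ hn => hn.2) Y
    rw [hshift] at hsplit
    push_cast [hsplit]
    ring_nf
  · intro Y hY
    have := E1 Y hY
    have heq : 4 / Real.pi ^ 2 * ((p:ℝ)/((p:ℝ)+1)) * (1 + 1/((p:ℕ):ℝ)) = 4 / Real.pi ^ 2 := by
      field_simp
    rw [heq]
    exact this




noncomputable def g1 (n : ℕ) : ℤ := if (n:ℤ) % 4 = 1 then (n:ℤ) else -(n:ℤ)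
noncomputable def g3 (n : ℕ) : ℤ := if (n:ℤ) % 4 = 3 then 4*(n:ℤ) else -(4*(n:ℤ))

lemma int_dvd_iff (q : ℕ) (f : ℤ) : (q:ℤ) ∣ f ↔ q ∣ f.natAbs := by
  rw [← Int.natAbs_dvd_natAbs, Int.natAbs_natCast]

lemma sf_natAbs {f : ℤ} : Squarefree f ↔ Squarefree f.natAbs := Int.squarefree_natAbs.symm

lemma natAbs_cast_real (f : ℤ) : ((f.natAbs : ℕ) : ℝ) = |(f:ℝ)| := by
  rw [Nat.cast_natAbs]
  push_cast
  rfl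

lemma abs_le_iff {f : ℤ} {X : ℝ} (hX : 0 ≤ X) : |(f:ℝ)| ≤ X ↔ f.natAbs ≤ ⌊X⌋₊ := by
  rw [Nat.le_floor_iff hX, natAbs_cast_real]

section MainCard
variable (p : ℕ) (X : ℝ)

noncomputable def F1 : Finset ℕ := fdset (fun n => Squarefree n ∧ ¬ 2 ∣ n ∧ p ∣ n) X
noncomputable def F2 : Finset ℕ := fdset (fun n => Squarefree n ∧ 2 ∣ n ∧ p ∣ 4*n) (X/4)
noncomputable def F3 : Finset ℕ := fdset (fun n => Squarefree n ∧ ¬ 2 ∣ n ∧ p ∣ 4*n) (X/4)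

noncomputable def G : Finset ℤ :=
  (F1 p X).image g1 ∪ ((F2 p X).image (fun n : ℕ => (4*(n:ℤ))) ∪
    ((F2 p X).image (fun n : ℕ => -(4*(n:ℤ))) ∪ (F3 p X).image g3))

lemma mem_F1 {n : ℕ} : n ∈ F1 p X ↔ (1 ≤ n ∧ n ≤ ⌊X⌋₊) ∧
    (Squarefree n ∧ ¬ 2 ∣ n ∧ p ∣ n) := mem_fdset

lemma mem_F2 {n : ℕ} : n ∈ F2 p X ↔ (1 ≤ n ∧ n ≤ ⌊X/4⌋₊) ∧
    (Squarefree n ∧ 2 ∣ n ∧ p ∣ 4*n) := mem_fdset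

lemma mem_F3 {n : ℕ} : n ∈ F3 p X ↔ (1 ≤ n ∧ n ≤ ⌊X/4⌋₊) ∧
    (Squarefree n ∧ ¬ 2 ∣ n ∧ p ∣ 4*n) := mem_fdset

lemma set_eq (hX : 1 ≤ X) :
    {f : ℤ | IsFundamentalDiscriminant f ∧ 0 < |f| ∧ |(f : ℝ)| ≤ X ∧ (p : ℤ) ∣ f}
      = (↑(G p X) : Set ℤ) := by
  have hX0 : (0:ℝ) ≤ X := by linarith
  have hX40 : (0:ℝ) ≤ X/4 := by linarith
  ext f
  simp only [Set.mem_setOf_eq, G, Finset.coe_union, Set.mem_union, Finset.coe_image,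
    Set.mem_image, Finset.mem_coe]
  constructor
  · rintro ⟨hFD, hpos, hle, hdvdf⟩
    rcases hFD with ⟨h4, hsff⟩ | ⟨m, rfl, hsfm, hm4⟩
    · -- F1 branch
      left
      refine ⟨f.natAbs, ?_, ?_⟩
      · rw [mem_F1]
        have hf0 : f ≠ 0 := by omega
        refine ⟨⟨Int.natAbs_pos.mpr hf0, (abs_le_iff hX0).mp hle⟩,
          sf_natAbs.mp hsff, ?_, (int_dvd_iff p f).mp hdvdf⟩
        intro h2
        have h2' : (2:ℤ) ∣ f := (int_dvd_iff 2 f).mpr h2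
        omega
      · rcases Int.natAbs_eq f with he | he
        · rw [g1, ← he, if_pos (by omega)]
        · rw [g1, if_neg (by omega)]
          omega
    · -- f = 4 * m
      right
      have hm0 : m ≠ 0 := by rcases hm4 with h | h <;> omega
      have hn1 : 1 ≤ m.natAbs := Int.natAbs_pos.mpr hm0
      have hnle : m.natAbs ≤ ⌊X/4⌋₊ := by
        apply Nat.le_floor
        rw [natAbs_cast_real]
        have h' : |((4*m : ℤ):ℝ)| ≤ X := hle
        push_cast at h'
        rw [abs_mul, show |(4:ℝ)| = 4 from by norm_num] at h'
        linarith
      have hpd : p ∣ 4*m.natAbs := by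
        have := (int_dvd_iff p (4*m)).mp hdvdf
        rwa [Int.natAbs_mul, show (4:ℤ).natAbs = 4 from rfl] at this
      have hsfn : Squarefree m.natAbs := sf_natAbs.mp hsfm
      rcases Int.natAbs_eq m with he | he
      all_goals rcases hm4 with hm42 | hm43
      · left
        refine ⟨m.natAbs, ?_, by omega⟩
        rw [mem_F2]
        exact ⟨⟨hn1, hnle⟩, hsfn, by omega, hpd⟩
      · right; right
        refine ⟨m.natAbs, ?_, ?_⟩
        · rw [mem_F3]
          refine ⟨⟨hn1, hnle⟩, hsfn, ?_, hpd⟩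
          intro h2
          have h2' : (2:ℤ) ∣ ((m.natAbs : ℕ) : ℤ) := Int.natCast_dvd_natCast.mpr h2
          omega
        · rw [g3, if_pos (by omega)]; omega
      · right; left
        refine ⟨m.natAbs, ?_, by omega⟩
        rw [mem_F2]
        refine ⟨⟨hn1, hnle⟩, hsfn, ?_, hpd⟩
        have h2 : (2:ℤ) ∣ ((m.natAbs : ℕ) : ℤ) := by omega
        exact_mod_cast h2
      · right; right
        refine ⟨m.natAbs, ?_, ?_⟩
        · rw [mem_F3]
          refine ⟨⟨hn1, hnle⟩, hsfn, ?_, hpd⟩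
          intro h2
          have h2' : (2:ℤ) ∣ ((m.natAbs : ℕ) : ℤ) := Int.natCast_dvd_natCast.mpr h2
          omega
        · rw [g3, if_neg (by omega)]; omega
  · intro hmem
    rcases hmem with ⟨n, hn, rfl⟩ | ⟨n, hn, rfl⟩ | ⟨n, hn, rfl⟩ | ⟨n, hn, rfl⟩
    · rw [mem_F1] at hn
      obtain ⟨⟨hn1, hnle⟩, hsfn, hodd, hpn⟩ := hn
      have hodd' : ¬ (2:ℤ) ∣ (n:ℤ) := fun h => hodd (by exact_mod_cast h)
      have hsfi : Squarefree ((n:ℤ)) := sf_natAbs.mpr (by simpa using hsfn)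
      have hsfin : Squarefree (-(n:ℤ)) := sf_natAbs.mpr (by simpa using hsfn)
      have hpi : (p:ℤ) ∣ (n:ℤ) := Int.natCast_dvd_natCast.mpr hpn
      have hn1' : (1:ℤ) ≤ (n:ℤ) := by exact_mod_cast hn1
      have hnX : ((n:ℤ)).natAbs ≤ ⌊X⌋₊ := by rwa [Int.natAbs_natCast]
      rw [g1]
      split_ifs with hif
      · exact ⟨Or.inl ⟨hif, hsfi⟩, by rw [abs_pos]; omega, (abs_le_iff hX0).mpr hnX, hpi⟩
      · refine ⟨Or.inl ⟨by omega, hsfin⟩, by rw [abs_pos]; omega, ?_, (dvd_neg).mpr hpi⟩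
        rw [abs_le_iff hX0, Int.natAbs_neg]
        exact hnX
    · rw [mem_F2] at hn
      obtain ⟨⟨hn1, hnle⟩, hsfn, heven, hpn⟩ := hn
      have hle' : ((n:ℕ):ℝ) ≤ X/4 := (Nat.le_floor_iff hX40).mp hnle
      have hsfi : Squarefree ((n:ℤ)) := sf_natAbs.mpr (by simpa using hsfn)
      have h4n : ¬ 4 ∣ n := by
        intro h4
        have h22 : (2*2) ∣ n := by omega
        exact (by norm_num : ¬ IsUnit 2) (hsfn 2 h22)
      have hmodi : ((n:ℤ)) % 4 = 2 := by
        have h2 : (2:ℤ) ∣ (n:ℤ) := by exact_mod_cast Int.natCast_dvd_natCast.mpr heven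
        have h4 : ¬ (4:ℤ) ∣ (n:ℤ) := fun h => h4n (by exact_mod_cast h)
        omega
      refine ⟨Or.inr ⟨(n:ℤ), rfl, hsfi, Or.inl hmodi⟩, by rw [abs_pos]; omega, ?_, ?_⟩
      · rw [abs_le_iff hX0, Int.natAbs_mul, show (4:ℤ).natAbs = 4 from rfl, Int.natAbs_natCast,
          Nat.le_floor_iff hX0]
        push_cast
        linarith
      · have h' : (p:ℤ) ∣ ((4*n : ℕ):ℤ) := Int.natCast_dvd_natCast.mpr hpn
        push_cast at h'
        exact h'
    · rw [mem_F2] at hn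
      obtain ⟨⟨hn1, hnle⟩, hsfn, heven, hpn⟩ := hn
      have hle' : ((n:ℕ):ℝ) ≤ X/4 := (Nat.le_floor_iff hX40).mp hnle
      have hsfi : Squarefree (-(n:ℤ)) := sf_natAbs.mpr (by simpa using hsfn)
      have h4n : ¬ 4 ∣ n := by
        intro h4
        have h22 : (2*2) ∣ n := by omega
        exact (by norm_num : ¬ IsUnit 2) (hsfn 2 h22)
      have hmodi : (-(n:ℤ)) % 4 = 2 := by
        have h2 : (2:ℤ) ∣ (n:ℤ) := by exact_mod_cast Int.natCast_dvd_natCast.mpr heven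
        have h4 : ¬ (4:ℤ) ∣ (n:ℤ) := fun h => h4n (by exact_mod_cast h)
        omega
      refine ⟨Or.inr ⟨-(n:ℤ), by ring, hsfi, Or.inl hmodi⟩, by rw [abs_pos]; omega, ?_, ?_⟩
      · rw [abs_le_iff hX0, Int.natAbs_neg, Int.natAbs_mul,
          show (4:ℤ).natAbs = 4 from rfl, Int.natAbs_natCast, Nat.le_floor_iff hX0]
        push_cast
        linarith
      · have h' : (p:ℤ) ∣ ((4*n : ℕ):ℤ) := Int.natCast_dvd_natCast.mpr hpn
        push_cast at h'
        exact h'.neg_right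
    · rw [mem_F3] at hn
      obtain ⟨⟨hn1, hnle⟩, hsfn, hodd, hpn⟩ := hn
      have hle' : ((n:ℕ):ℝ) ≤ X/4 := (Nat.le_floor_iff hX40).mp hnle
      have hodd' : ¬ (2:ℤ) ∣ (n:ℤ) := fun h => hodd (by exact_mod_cast h)
      have hsfi : Squarefree ((n:ℤ)) := sf_natAbs.mpr (by simpa using hsfn)
      have hsfin : Squarefree (-(n:ℤ)) := sf_natAbs.mpr (by simpa using hsfn)
      have hdp : (p:ℤ) ∣ 4*(n:ℤ) := by
        have h' : (p:ℤ) ∣ ((4*n : ℕ):ℤ) := Int.natCast_dvd_natCast.mpr hpn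
        push_cast at h'
        exact h'
      have habs4 : (4*(n:ℤ)).natAbs ≤ ⌊X⌋₊ := by
        rw [Int.natAbs_mul, show (4:ℤ).natAbs = 4 from rfl, Int.natAbs_natCast,
          Nat.le_floor_iff hX0]
        push_cast
        linarith
      rw [g3]
      split_ifs with hif
      · refine ⟨Or.inr ⟨(n:ℤ), rfl, hsfi, Or.inr hif⟩, by rw [abs_pos]; omega, ?_, hdp⟩
        rw [abs_le_iff hX0]
        exact habs4
      · refine ⟨Or.inr ⟨-(n:ℤ), by ring, hsfin, Or.inr (by omega)⟩, by rw [abs_pos]; omega, ?_, hdp.neg_right⟩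
        rw [abs_le_iff hX0, Int.natAbs_neg]
        exact habs4
end MainCard

lemma card_G (p : ℕ) (X : ℝ) : (G p X).card = (F1 p X).card + (2 * (F2 p X).card + (F3 p X).card) := by
  classical
  have odd1 : ∀ {n : ℕ}, n ∈ F1 p X → (1 ≤ n ∧ ¬ (2:ℤ) ∣ (n:ℤ)) := by
    intro n hn
    rw [mem_F1] at hn
    exact ⟨hn.1.1, fun h => hn.2.2.1 (by exact_mod_cast h)⟩
  have even2 : ∀ {n : ℕ}, n ∈ F2 p X → (1 ≤ n ∧ (2:ℤ) ∣ (n:ℤ)) := by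
    intro n hn
    rw [mem_F2] at hn
    exact ⟨hn.1.1, by exact_mod_cast Int.natCast_dvd_natCast.mpr hn.2.2.1⟩
  have odd3 : ∀ {n : ℕ}, n ∈ F3 p X → (1 ≤ n ∧ ¬ (2:ℤ) ∣ (n:ℤ)) := by
    intro n hn
    rw [mem_F3] at hn
    exact ⟨hn.1.1, fun h => hn.2.2.1 (by exact_mod_cast h)⟩
  have hd1 : Disjoint ((F1 p X).image g1)
      ((F2 p X).image (fun n : ℕ => (4*(n:ℤ))) ∪
        ((F2 p X).image (fun n : ℕ => -(4*(n:ℤ))) ∪ (F3 p X).image g3)) := by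
    rw [Finset.disjoint_left]
    rintro x hx hx'
    obtain ⟨n, hn, rfl⟩ := Finset.mem_image.mp hx
    obtain ⟨h1n, h2n⟩ := odd1 hn
    rw [Finset.mem_union, Finset.mem_union] at hx'
    rcases hx' with h | h | h
    · obtain ⟨u, hu, he⟩ := Finset.mem_image.mp h
      rw [g1] at he; split_ifs at he <;> omega
    · obtain ⟨u, hu, he⟩ := Finset.mem_image.mp h
      rw [g1] at he; split_ifs at he <;> omega
    · obtain ⟨u, hu, he⟩ := Finset.mem_image.mp h
      obtain ⟨h1u, h2u⟩ := odd3 hu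
      rw [g1, g3] at he; split_ifs at he <;> omega
  have hd2 : Disjoint ((F2 p X).image (fun n : ℕ => (4*(n:ℤ))))
      ((F2 p X).image (fun n : ℕ => -(4*(n:ℤ))) ∪ (F3 p X).image g3) := by
    rw [Finset.disjoint_left]
    rintro x hx hx'
    obtain ⟨n, hn, rfl⟩ := Finset.mem_image.mp hx
    obtain ⟨h1n, h2n⟩ := even2 hn
    rw [Finset.mem_union] at hx'
    rcases hx' with h | h
    · obtain ⟨u, hu, he⟩ := Finset.mem_image.mp h
      obtain ⟨h1u, h2u⟩ := even2 hu
      omega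
    · obtain ⟨u, hu, he⟩ := Finset.mem_image.mp h
      obtain ⟨h1u, h2u⟩ := odd3 hu
      rw [g3] at he; split_ifs at he <;> omega
  have hd3 : Disjoint ((F2 p X).image (fun n : ℕ => -(4*(n:ℤ)))) ((F3 p X).image g3) := by
    rw [Finset.disjoint_left]
    rintro x hx hx'
    obtain ⟨n, hn, rfl⟩ := Finset.mem_image.mp hx
    obtain ⟨h1n, h2n⟩ := even2 hn
    obtain ⟨u, hu, he⟩ := Finset.mem_image.mp hx'
    obtain ⟨h1u, h2u⟩ := odd3 hu
    rw [g3] at he; split_ifs at he <;> omega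
  rw [G, Finset.card_union_of_disjoint hd1, Finset.card_union_of_disjoint hd2,
    Finset.card_union_of_disjoint hd3]
  have hc1 : ((F1 p X).image g1).card = (F1 p X).card := by
    apply Finset.card_image_of_injOn
    intro a ha b hb hab
    have h1a := (odd1 ha).1
    have h1b := (odd1 hb).1
    rw [g1, g1] at hab; split_ifs at hab <;> omega
  have hc2 : ((F2 p X).image (fun n : ℕ => (4*(n:ℤ)))).card = (F2 p X).card := by
    apply Finset.card_image_of_injective
    intro a b h
    simp only [] at h
    omega
  have hc2' : ((F2 p X).image (fun n : ℕ => -(4*(n:ℤ)))).card = (F2 p X).card := by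
    apply Finset.card_image_of_injective
    intro a b h
    simp only [] at h
    omega
  have hc3 : ((F3 p X).image g3).card = (F3 p X).card := by
    apply Finset.card_image_of_injOn
    intro a ha b hb hab
    have h1a := (odd3 ha).1
    have h1b := (odd3 hb).1
    rw [g3, g3] at hab; split_ifs at hab <;> omega
  rw [hc1, hc2, hc2', hc3]
  ring

lemma main_card (p : ℕ) (X : ℝ) (hX : 1 ≤ X) :
    {f : ℤ | IsFundamentalDiscriminant f ∧ 0 < |f| ∧ |(f : ℝ)| ≤ X ∧ (p : ℤ) ∣ f}.ncard
      = cnt (fun n => Squarefree n ∧ ¬ 2 ∣ n ∧ p ∣ n) X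
        + (2 * cnt (fun n => Squarefree n ∧ 2 ∣ n ∧ p ∣ 4*n) (X/4)
          + cnt (fun n => Squarefree n ∧ ¬ 2 ∣ n ∧ p ∣ 4*n) (X/4)) := by
  rw [set_eq _ _ hX, Set.ncard_coe_finset, card_G]
  rfl

lemma cnt_false (Z : ℝ) : cnt (fun _ => False) Z = 0 := by
  classical
  rw [cnt, fdset]
  simp

set_option maxHeartbeats 2000000 in
/-- For every prime `p` and `X ≥ 1`, the number of fundamental
discriminants `f` with `0 < |f| ≤ X` and `p ∣ f` is `6X/(π²(p+1)) + O((X/p)^{1/2})`,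
with a universal constant. -/
theorem count_fundamental_discriminants_dvd :
    ∃ C : ℝ, 0 < C ∧ ∀ p : ℕ, p.Prime → ∀ X : ℝ, 1 ≤ X →
      |(({f : ℤ | IsFundamentalDiscriminant f ∧ 0 < |f| ∧ |(f : ℝ)| ≤ X ∧
            (p : ℤ) ∣ f}.ncard : ℝ))
          - 6 * X / (Real.pi ^ 2 * ((p : ℝ) + 1))| ≤ C * (X / p) ^ ((1 : ℝ) / 2) := by
  refine ⟨256, by norm_num, ?_⟩
  intro p hp X hX
  have hX0 : (0:ℝ) ≤ X := by linarith
  have hppos : (0:ℝ) < (p:ℝ) := by exact_mod_cast hp.pos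
  have hπ : (0:ℝ) < Real.pi ^ 2 := by positivity
  have hp1 : (0:ℝ) < (p:ℝ) + 1 := by linarith
  rw [main_card p X hX, show ((X:ℝ)/(p:ℝ)) ^ ((1:ℝ)/2) = Real.sqrt (X/p) from
    (Real.sqrt_eq_rpow _).symm]
  by_cases hp2 : p = 2
  · subst hp2
    have hc1 : cnt (fun n => Squarefree n ∧ ¬ 2 ∣ n ∧ 2 ∣ n) X = 0 := by
      rw [cnt_congr X (Q := fun _ => False) (fun n hn => by tauto), cnt_false]
    have hc2 : cnt (fun n => Squarefree n ∧ 2 ∣ n ∧ 2 ∣ 4*n) (X/4)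
        = cnt (fun u => Squarefree u ∧ ¬ 2 ∣ u) ((X/4)/((2:ℕ):ℝ)) := by
      rw [cnt_congr (X/4) (Q := fun n => Squarefree n ∧ 2 ∣ n)
        (fun n hn => ⟨fun ⟨a, b, _⟩ => ⟨a, b⟩, fun ⟨a, b⟩ => ⟨a, b, ⟨2*n, by ring⟩⟩⟩)]
      exact cnt_shift 2 two_pos _ _
        (fun u hu => by
          show Squarefree (2*u) ∧ 2 ∣ 2*u ↔ Squarefree u ∧ ¬ 2 ∣ u
          rw [squarefree_prime_mul Nat.prime_two]
          simp only [dvd_mul_right, and_true]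
          tauto)
        (fun n _ hn => hn.2) (X/4)
    have hc3 : cnt (fun n => Squarefree n ∧ ¬ 2 ∣ n ∧ 2 ∣ 4*n) (X/4)
        = cnt (fun u => Squarefree u ∧ ¬ 2 ∣ u) (X/4) :=
      cnt_congr (X/4) (fun n hn => ⟨fun ⟨a, b, _⟩ => ⟨a, b⟩, fun ⟨a, b⟩ => ⟨a, b, ⟨2*n, by ring⟩⟩⟩)
    rw [hc1, hc2, hc3]
    have h2 := E1 ((X/4)/((2:ℕ):ℝ)) (by positivity)
    have h3 := E1 (X/4) (by linarith)
    have hs2 : Real.sqrt ((X/4)/((2:ℕ):ℝ)) ≤ Real.sqrt (X/2) := by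
      apply Real.sqrt_le_sqrt
      push_cast
      linarith
    have hs3 : Real.sqrt (X/4) ≤ Real.sqrt (X/2) := by
      apply Real.sqrt_le_sqrt
      linarith
    have hM : 2*(4/Real.pi^2*((X/4)/((2:ℕ):ℝ))) + 4/Real.pi^2*(X/4)
        = 6*X/(Real.pi^2*(((2:ℕ):ℝ)+1)) := by
      push_cast
      field_simp
      ring
    have hsnn : (0:ℝ) ≤ Real.sqrt (X/2) := Real.sqrt_nonneg _
    push_cast
    rw [abs_le] at h2 h3 ⊢
    push_cast at hM h2 h3
    constructor <;> nlinarith [h2.1, h2.2, h3.1, h3.2]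
  · -- p odd
    have hpd4 : ¬ p ∣ 4 := by
      intro h
      have := (Nat.prime_dvd_prime_iff_eq hp Nat.prime_two).mp
        (hp.dvd_of_dvd_pow (n := 2) (by norm_num [show (4:ℕ) = 2^2 from rfl] at h ⊢; exact h))
      exact hp2 this
    have hdvd4 : ∀ n : ℕ, p ∣ 4*n ↔ p ∣ n := by
      intro n
      rw [Nat.Prime.dvd_mul hp]
      tauto
    have h2p : ∀ u : ℕ, 2 ∣ p * u ↔ 2 ∣ u := by
      intro u
      rw [Nat.Prime.dvd_mul Nat.prime_two]
      have : ¬ 2 ∣ p := fun hd => hp2 ((Nat.prime_dvd_prime_iff_eq Nat.prime_two hp).mp hd).symm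
      tauto
    -- the shift for odd-part counts
    have hshift : ∀ Y : ℝ, cnt (fun n => Squarefree n ∧ ¬ 2 ∣ n ∧ p ∣ n) Y
        = cnt (fun n => (Squarefree n ∧ ¬ 2 ∣ n) ∧ ¬ p ∣ n) (Y/((p:ℕ):ℝ)) := by
      intro Y
      rw [cnt_congr Y (Q := fun n => (Squarefree n ∧ ¬ 2 ∣ n) ∧ p ∣ n) (fun n hn => by tauto)]
      exact cnt_shift p hp.pos _ _
        (fun u hu => by
          show (Squarefree (p*u) ∧ ¬ 2 ∣ p*u) ∧ p ∣ p*u ↔ (Squarefree u ∧ ¬ 2 ∣ u) ∧ ¬ p ∣ u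
          rw [squarefree_prime_mul hp]
          have := h2p u
          simp only [dvd_mul_right, and_true]
          tauto)
        (fun n _ hn => hn.2) Y
    have hc1 := hshift X
    have hc2 : cnt (fun n => Squarefree n ∧ 2 ∣ n ∧ p ∣ 4*n) (X/4)
        = cnt (fun n => (Squarefree n ∧ ¬ 2 ∣ n) ∧ ¬ p ∣ n) (((X/4)/((2:ℕ):ℝ))/((p:ℕ):ℝ)) := by
      rw [cnt_congr (X/4) (Q := fun n => Squarefree n ∧ 2 ∣ n ∧ p ∣ n)
        (fun n hn => by rw [hdvd4 n]),
        cnt_shift 2 two_pos (fun u => Squarefree u ∧ ¬ 2 ∣ u ∧ p ∣ u) _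
        (fun u hu => by
          show Squarefree (2*u) ∧ 2 ∣ 2*u ∧ p ∣ 2*u ↔ Squarefree u ∧ ¬ 2 ∣ u ∧ p ∣ u
          rw [squarefree_prime_mul Nat.prime_two]
          have hpu : p ∣ 2*u ↔ p ∣ u := by
            rw [Nat.Prime.dvd_mul hp]
            have : ¬ p ∣ 2 := fun hd => hp2 ((Nat.prime_dvd_prime_iff_eq hp Nat.prime_two).mp hd)
            tauto
          simp only [dvd_mul_right, true_and, hpu]
          tauto)
        (fun n _ hn => hn.2.1) (X/4),
        hshift ((X/4)/((2:ℕ):ℝ))]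
    have hc3 : cnt (fun n => Squarefree n ∧ ¬ 2 ∣ n ∧ p ∣ 4*n) (X/4)
        = cnt (fun n => (Squarefree n ∧ ¬ 2 ∣ n) ∧ ¬ p ∣ n) ((X/4)/((p:ℕ):ℝ)) := by
      rw [cnt_congr (X/4) (Q := fun n => Squarefree n ∧ ¬ 2 ∣ n ∧ p ∣ n)
        (fun n hn => by rw [hdvd4 n]), hshift (X/4)]
    rw [hc1, hc2, hc3]
    have h1 := E3 hp hp2 (X/((p:ℕ):ℝ)) (by positivity)
    have h2 := E3 hp hp2 (((X/4)/((2:ℕ):ℝ))/((p:ℕ):ℝ)) (by positivity)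
    have h3 := E3 hp hp2 ((X/4)/((p:ℕ):ℝ)) (by positivity)
    have hs2 : Real.sqrt (((X/4)/((2:ℕ):ℝ))/((p:ℕ):ℝ)) ≤ Real.sqrt (X/p) := by
      apply Real.sqrt_le_sqrt
      push_cast
      rw [div_le_div_iff₀ (by positivity) hppos]
      nlinarith
    have hs3 : Real.sqrt ((X/4)/((p:ℕ):ℝ)) ≤ Real.sqrt (X/p) := by
      apply Real.sqrt_le_sqrt
      push_cast
      rw [div_le_div_iff₀ (by positivity) hppos]
      nlinarith
    have hM : 4/Real.pi^2*((p:ℝ)/((p:ℝ)+1))*(X/((p:ℕ):ℝ))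
        + 2*(4/Real.pi^2*((p:ℝ)/((p:ℝ)+1))*(((X/4)/((2:ℕ):ℝ))/((p:ℕ):ℝ)))
        + 4/Real.pi^2*((p:ℝ)/((p:ℝ)+1))*((X/4)/((p:ℕ):ℝ))
        = 6*X/(Real.pi^2*((p:ℝ)+1)) := by
      push_cast
      field_simp
      ring
    have hsnn : (0:ℝ) ≤ Real.sqrt (X/p) := Real.sqrt_nonneg _
    push_cast
    rw [abs_le] at h1 h2 h3 ⊢
    push_cast at hM h1 h2 h3 hs2 hs3
    constructor <;>
      linarith [h1.1, h1.2, h2.1, h2.2, h3.1, h3.2, hs2, hs3, hsnn]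
end

section
/- There exists a constant C > 0 such that for every positive integer n having at least two distinct prime factors, ∏_{q | n, q prime} (1 + 1/q) ≤ C·log(ω(n)), where ω(n) denotes the number of distinct prime factors of n. Equivalently, ∏_{q | n, q prime} (1 − 1/(q+1))^{−1} ≪ log(ω(n)) with a universal implied constant. -/
open Finset

/-- primes up to N -/
private def Pr (N : ℕ) : Finset ℕ := (Finset.range (N + 1)).filter Nat.Prime

private lemma mem_Pr {p N : ℕ} : p ∈ Pr N ↔ p ≤ N ∧ p.Prime := by
  simp [Pr, Nat.lt_succ_iff, and_comm]

private lemma Pr_mono {M N : ℕ} (h : M ≤ N) : Pr M ⊆ Pr N := by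
  intro p hp; rw [mem_Pr] at hp ⊢; exact ⟨hp.1.trans h, hp.2⟩

/-- Chebyshev-type bound: θ(N) ≤ N log 4. -/
private lemma theta_le (N : ℕ) : ∑ p ∈ Pr N, Real.log p ≤ N * Real.log 4 := by
  have h1 : ∑ p ∈ Pr N, Real.log p = Real.log (primorial N) := by
    rw [primorial]
    rw [Nat.cast_prod, Real.log_prod]
    · rfl
    · intro p hp
      have := (mem_Pr.mp hp).2.pos
      positivity
  rw [h1]
  calc Real.log (primorial N) ≤ Real.log ((4:ℕ) ^ N) := by
        apply Real.log_le_log (by exact_mod_cast (primorial_pos N))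
        exact_mod_cast primorial_le_4_pow N
    _ = N * Real.log 4 := by push_cast; rw [Real.log_pow]

private lemma legendre_dvd {p N : ℕ} (hp : p.Prime) (hpN : p ≤ N) :
    p ^ (N / p) ∣ N.factorial := by
  rw [Nat.Prime.pow_dvd_factorial_iff hp (Nat.lt_succ_self _)]
  have h1 : 1 ∈ Finset.Ico 1 (Nat.log p N + 1) := by
    simp [Nat.succ_le_iff, Nat.log_pos hp.one_lt hpN]
  calc N / p = N / p ^ 1 := by rw [pow_one]
    _ ≤ ∑ i ∈ Finset.Ico 1 (Nat.log p N + 1), N / p ^ i :=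
      Finset.single_le_sum (f := fun i => N / p ^ i) (fun i _ => Nat.zero_le _) h1

private lemma log_factorial (N : ℕ) :
    Real.log N.factorial
      = ∑ p ∈ N.factorial.primeFactors, (N.factorial.factorization p : ℝ) * Real.log p := by
  conv_lhs => rw [← Nat.factorization_prod_pow_eq_self N.factorial_ne_zero]
  rw [Finsupp.prod, Nat.cast_prod, Real.log_prod]
  · rw [Nat.support_factorization]
    apply Finset.sum_congr rfl
    intro p hp
    rw [Nat.cast_pow, Real.log_pow]
  · intro p hp
    have hp' : p.Prime := Nat.prime_of_mem_primeFactors (by rwa [Nat.support_factorization] at hp)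
    have := hp'.pos
    positivity

/-- Mertens' first theorem (upper bound). -/
private lemma mertens1 {N : ℕ} (hN : 1 ≤ N) :
    ∑ p ∈ Pr N, Real.log p / p ≤ Real.log N + Real.log 4 := by
  have hN0 : (0:ℝ) < N := by exact_mod_cast hN
  have key : ∑ p ∈ Pr N, (N : ℝ) * (Real.log p / p) ≤ (N:ℝ) * (Real.log N + Real.log 4) := by
    have step1 : ∑ p ∈ Pr N, (N : ℝ) * (Real.log p / p)
        ≤ ∑ p ∈ Pr N, (((N / p : ℕ) : ℝ) + 1) * Real.log p := by
      apply Finset.sum_le_sum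
      intro p hp
      obtain ⟨hpN, hpp⟩ := mem_Pr.mp hp
      have hp0 : (0:ℝ) < p := by exact_mod_cast hpp.pos
      have hlogp : 0 ≤ Real.log p := Real.log_natCast_nonneg p
      have hdiv : (N:ℝ)/p ≤ ((N / p : ℕ) : ℝ) + 1 := by
        rw [div_le_iff₀ hp0]
        have h1 := Nat.div_add_mod N p
        have h2 := Nat.mod_lt N hpp.pos
        have h4 : (N / p + 1) * p = p * (N / p) + p := by ring
        have h3 : N ≤ (N / p + 1) * p := by omega
        exact_mod_cast h3
      calc (N : ℝ) * (Real.log p / p) = ((N:ℝ)/p) * Real.log p := by ring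
        _ ≤ (((N / p : ℕ) : ℝ) + 1) * Real.log p := mul_le_mul_of_nonneg_right hdiv hlogp
    have step2 : ∑ p ∈ Pr N, ((N / p : ℕ) : ℝ) * Real.log p ≤ Real.log N.factorial := by
      rw [log_factorial N]
      have t1 : ∑ p ∈ Pr N, ((N / p : ℕ) : ℝ) * Real.log p
          ≤ ∑ p ∈ Pr N, (N.factorial.factorization p : ℝ) * Real.log p := by
        apply Finset.sum_le_sum
        intro p hp
        obtain ⟨hpN, hpp⟩ := mem_Pr.mp hp
        have hle : N / p ≤ N.factorial.factorization p :=
          (Nat.Prime.pow_dvd_iff_le_factorization hpp N.factorial_ne_zero).mp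
            (legendre_dvd hpp hpN)
        exact mul_le_mul_of_nonneg_right (by exact_mod_cast hle) (Real.log_natCast_nonneg p)
      refine t1.trans (Finset.sum_le_sum_of_subset_of_nonneg ?_ ?_)
      · intro p hp
        obtain ⟨hpN, hpp⟩ := mem_Pr.mp hp
        exact Nat.mem_primeFactors.mpr ⟨hpp, hpp.dvd_factorial.mpr hpN, N.factorial_ne_zero⟩
      · intro p _ _
        have : 0 ≤ Real.log p := Real.log_natCast_nonneg p
        positivity
    have step3 : Real.log N.factorial ≤ (N:ℝ) * Real.log N := by
      calc Real.log N.factorial ≤ Real.log ((N:ℕ) ^ N) := by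
            apply Real.log_le_log (by exact_mod_cast N.factorial_pos)
            exact_mod_cast Nat.factorial_le_pow N
        _ = (N:ℝ) * Real.log N := by push_cast; rw [Real.log_pow]
    calc ∑ p ∈ Pr N, (N : ℝ) * (Real.log p / p)
        ≤ ∑ p ∈ Pr N, (((N / p : ℕ) : ℝ) + 1) * Real.log p := step1
      _ = ∑ p ∈ Pr N, ((N / p : ℕ) : ℝ) * Real.log p + ∑ p ∈ Pr N, Real.log p := by
          rw [← Finset.sum_add_distrib]; apply Finset.sum_congr rfl; intros; ring
      _ ≤ (N:ℝ) * Real.log N + (N:ℝ) * Real.log 4 := add_le_add (step2.trans step3) (theta_le N)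
      _ = (N:ℝ) * (Real.log N + Real.log 4) := by ring
  rw [← Finset.mul_sum] at key
  exact le_of_mul_le_mul_left key hN0

private noncomputable def fD (j : ℕ) : ℝ := ∑ p ∈ Pr (2 ^ j), Real.log p / p
private noncomputable def gD (j : ℕ) : ℝ := ∑ p ∈ Pr (2 ^ j), 1 / (p : ℝ)
private noncomputable def aD (j : ℕ) : ℝ := 1 / (((j : ℝ) - 1) * Real.log 2)

private lemma fD_nonneg (j : ℕ) : 0 ≤ fD j := by
  apply Finset.sum_nonneg
  intro p hp
  have h1 : 0 ≤ Real.log p := Real.log_natCast_nonneg p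
  have h2 : (0:ℝ) < p := by exact_mod_cast (mem_Pr.mp hp).2.pos
  positivity

private lemma fD_bound (j : ℕ) : fD j ≤ ((j : ℝ) + 2) * Real.log 2 := by
  have h := mertens1 (N := 2 ^ j) (Nat.one_le_two_pow)
  have h1 : Real.log ((2:ℕ) ^ j : ℕ) = (j : ℝ) * Real.log 2 := by
    push_cast
    rw [Real.log_pow]
  have h2 : Real.log 4 = 2 * Real.log 2 := by
    rw [show (4:ℝ) = 2 ^ 2 by norm_num, Real.log_pow]
    norm_num
  calc fD j ≤ Real.log ((2:ℕ) ^ j : ℕ) + Real.log 4 := h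
    _ = ((j : ℝ) + 2) * Real.log 2 := by rw [h1, h2]; ring

private lemma aD_pos {j : ℕ} (hj : 2 ≤ j) : 0 < aD j := by
  have : (1:ℝ) ≤ (j:ℝ) - 1 := by
    have : (2:ℝ) ≤ (j:ℝ) := by exact_mod_cast hj
    linarith
  have hl2 : 0 < Real.log 2 := Real.log_pos (by norm_num)
  unfold aD
  positivity

private lemma abel : ∀ J : ℕ, 2 ≤ J →
    gD J ≤ fD J * aD J + (∑ j ∈ Icc 2 (J - 1), fD j * (aD j - aD (j + 1))) + gD 2 := by
  intro J hJ
  induction J, hJ using Nat.le_induction with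
  | base =>
    simp only [show (2:ℕ) - 1 = 1 by norm_num, Finset.Icc_eq_empty (by norm_num : ¬(2:ℕ) ≤ 1),
      Finset.sum_empty, add_zero, zero_add]
    nlinarith [fD_nonneg 2, aD_pos (le_refl 2)]
  | succ J hJ ih =>
    have hsub : Pr (2 ^ J) ⊆ Pr (2 ^ (J + 1)) :=
      Pr_mono (Nat.pow_le_pow_right (by norm_num) (Nat.le_succ J))
    have hJ1 : (0:ℝ) < (J:ℝ) := by exact_mod_cast lt_of_lt_of_le (by norm_num) hJ
    have hl2 : 0 < Real.log 2 := Real.log_pos (by norm_num)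
    have haJ1 : aD (J + 1) = 1 / ((J:ℝ) * Real.log 2) := by
      unfold aD; push_cast; ring_nf
    have hterm : ∀ p ∈ Pr (2 ^ (J + 1)) \ Pr (2 ^ J),
        1 / (p:ℝ) ≤ Real.log p / p * aD (J + 1) := by
      intro p hp
      rw [Finset.mem_sdiff] at hp
      obtain ⟨hp1, hp2⟩ := hp
      obtain ⟨hple, hpp⟩ := mem_Pr.mp hp1
      have hpgt : 2 ^ J < p := by
        by_contra h
        exact hp2 (mem_Pr.mpr ⟨le_of_not_gt h, hpp⟩)
      have hp0 : (0:ℝ) < p := by exact_mod_cast hpp.pos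
      have hlogp : (J:ℝ) * Real.log 2 ≤ Real.log p := by
        calc (J:ℝ) * Real.log 2 = Real.log (((2:ℕ) ^ J : ℕ) : ℝ) := by
              push_cast; rw [Real.log_pow]
          _ ≤ Real.log p := by
              apply Real.log_le_log (by positivity)
              exact_mod_cast le_of_lt hpgt
      rw [haJ1]
      rw [div_mul_div_comm, div_le_div_iff₀ hp0 (by positivity)]
      nlinarith [mul_le_mul_of_nonneg_right hlogp (le_of_lt hp0)]
    have hg : gD (J + 1) - gD J ≤ (fD (J + 1) - fD J) * aD (J + 1) := by
      unfold gD fD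
      rw [← Finset.sum_sdiff_eq_sub hsub, ← Finset.sum_sdiff_eq_sub hsub, Finset.sum_mul]
      exact Finset.sum_le_sum hterm
    have h1 : J - 1 + 1 = J := Nat.succ_pred_eq_of_pos (lt_of_lt_of_le (by norm_num) hJ)
    have hsum : ∑ j ∈ Icc 2 (J + 1 - 1), fD j * (aD j - aD (j + 1))
        = ∑ j ∈ Icc 2 (J - 1), fD j * (aD j - aD (j + 1)) + fD J * (aD J - aD (J + 1)) := by
      rw [Nat.add_sub_cancel, ← h1, Finset.sum_Icc_succ_top (by omega : 2 ≤ J - 1 + 1)]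
      rw [Nat.add_sub_cancel]
    rw [hsum]
    nlinarith [hg, ih]

private lemma tele : ∀ M : ℕ, 1 ≤ M →
    ∑ j ∈ Icc 2 M, (1 / ((j:ℝ) - 1) - 1 / j) = 1 - 1 / (M:ℝ) := by
  intro M hM
  induction M, hM using Nat.le_induction with
  | base => norm_num
  | succ M hM ih =>
    rw [Finset.sum_Icc_succ_top (by omega : 2 ≤ M + 1), ih]
    have hM0 : (0:ℝ) < M := by exact_mod_cast hM
    push_cast
    simp only [add_sub_cancel_right]
    field_simp
    ring

private lemma harm : ∀ M : ℕ, ∑ j ∈ Icc 2 (M + 1), (1 / ((j:ℝ) - 1)) ≤ 1 + Real.log M := by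
  intro M
  induction M with
  | zero =>
    simp [Finset.Icc_eq_empty (by norm_num : ¬(2:ℕ) ≤ 1)]
  | succ M ih =>
    rw [Finset.sum_Icc_succ_top (by omega : 2 ≤ M + 1 + 1)]
    rcases Nat.eq_zero_or_pos M with hM | hM
    · subst hM
      norm_num
    · have hM0 : (0:ℝ) < M := by exact_mod_cast hM
      have hstep : Real.log M + 1 / ((M:ℝ) + 1) ≤ Real.log (M + 1) := by
        have hx : (0:ℝ) < (M:ℝ) / (M + 1) := by positivity
        have := Real.log_le_sub_one_of_pos hx
        rw [Real.log_div (by positivity) (by positivity)] at this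
        have h1 : (M:ℝ) / (M + 1) - 1 = - (1 / ((M:ℝ) + 1)) := by field_simp; ring
        linarith [this, h1.le]
      push_cast
      push_cast at ih
      have : (1:ℝ) / ((M:ℝ) + 1 + 1 - 1) = 1 / ((M:ℝ) + 1) := by norm_num
      rw [this]
      linarith

private lemma gD2 : gD 2 ≤ 1 := by
  have h : Pr (2 ^ 2) = {2, 3} := by
    have : Pr 4 = {2, 3} := by decide
    simpa using this
  rw [gD, h]
  rw [Finset.sum_pair (by norm_num : (2:ℕ) ≠ 3)]
  norm_num

/-- Mertens-type bound: sum of 1/p over primes up to 2^J. -/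
private lemma mertens2 {J : ℕ} (hJ : 2 ≤ J) :
    ∑ p ∈ Pr (2 ^ J), 1 / (p:ℝ) ≤ Real.log J + 8 := by
  have hl2 : 0 < Real.log 2 := Real.log_pos (by norm_num)
  have hJR : (2:ℝ) ≤ (J:ℝ) := by exact_mod_cast hJ
  have hmain := abel J hJ
  -- bound fD J * aD J ≤ 4
  have h1 : fD J * aD J ≤ 4 := by
    have := fD_bound J
    have haJ : aD J = 1 / (((J:ℝ) - 1) * Real.log 2) := rfl
    have hpos : 0 < ((J:ℝ) - 1) * Real.log 2 := by nlinarith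
    calc fD J * aD J ≤ (((J:ℝ) + 2) * Real.log 2) * aD J := by
          apply mul_le_mul_of_nonneg_right this (le_of_lt (aD_pos hJ))
      _ = ((J:ℝ) + 2) / ((J:ℝ) - 1) := by
          have hJne : (J:ℝ) - 1 ≠ 0 := by linarith
          rw [haJ]; field_simp
      _ ≤ 4 := by
          rw [div_le_iff₀ (by linarith)]; nlinarith
  -- bound the middle sum
  have h2 : ∑ j ∈ Icc 2 (J - 1), fD j * (aD j - aD (j + 1))
      ≤ ∑ j ∈ Icc 2 (J - 1), (1 / ((j:ℝ) - 1) + 2 * (1 / ((j:ℝ) - 1) - 1 / j)) := by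
    apply Finset.sum_le_sum
    intro j hj
    have hj2 : 2 ≤ j := (Finset.mem_Icc.mp hj).1
    have hjR : (2:ℝ) ≤ (j:ℝ) := by exact_mod_cast hj2
    have hjne : (j:ℝ) - 1 ≠ 0 := by linarith
    have hj0 : (j:ℝ) ≠ 0 := by linarith
    have hl2ne : Real.log 2 ≠ 0 := ne_of_gt hl2
    have hd : aD j - aD (j + 1) = (1 / ((j:ℝ) - 1) - 1 / j) * (1 / Real.log 2) := by
      unfold aD
      push_cast
      rw [← one_div_mul_one_div, ← one_div_mul_one_div]
      ring
    have hdnn : 0 ≤ aD j - aD (j + 1) := by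
      rw [hd]
      have hle : 1 / ((j:ℝ)) ≤ 1 / ((j:ℝ) - 1) :=
        one_div_le_one_div_of_le (by linarith) (by linarith)
      have h1' : (0:ℝ) ≤ 1 / ((j:ℝ) - 1) - 1 / j := by linarith
      have h2' : (0:ℝ) ≤ 1 / Real.log 2 := by positivity
      exact mul_nonneg h1' h2'
    calc fD j * (aD j - aD (j + 1)) ≤ (((j:ℝ) + 2) * Real.log 2) * (aD j - aD (j + 1)) :=
          mul_le_mul_of_nonneg_right (fD_bound j) hdnn
      _ = ((j:ℝ) + 2) * (1 / ((j:ℝ) - 1) - 1 / j) := by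
          rw [hd]; field_simp
      _ = 1 / ((j:ℝ) - 1) + 2 * (1 / ((j:ℝ) - 1) - 1 / j) := by
          field_simp
          ring
  have h3 : ∑ j ∈ Icc 2 (J - 1), (1 / ((j:ℝ) - 1) + 2 * (1 / ((j:ℝ) - 1) - 1 / j))
      ≤ Real.log J + 3 := by
    rw [Finset.sum_add_distrib]
    have h31 : ∑ j ∈ Icc 2 (J - 1), 1 / ((j:ℝ) - 1) ≤ 1 + Real.log J := by
      rcases Nat.eq_zero_or_pos (J - 2) with h | h
      · have : J = 2 := by omega
        subst this
        simp [Finset.Icc_eq_empty (by norm_num : ¬(2:ℕ) ≤ 1)]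
        have := Real.log_natCast_nonneg 2
        linarith
      · have hJ1 : J - 1 = (J - 2) + 1 := by omega
        rw [hJ1]
        refine (harm (J - 2)).trans ?_
        have : Real.log (J - 2 : ℕ) ≤ Real.log J := by
          apply Real.log_le_log
          · exact_mod_cast h
          · exact_mod_cast Nat.sub_le J 2
        linarith
    have h32 : ∑ j ∈ Icc 2 (J - 1), 2 * (1 / ((j:ℝ) - 1) - 1 / j) ≤ 2 := by
      rw [← Finset.mul_sum]
      rcases Nat.lt_or_ge (J - 1) 2 with h | h
      · rw [Finset.Icc_eq_empty (by omega)]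
        norm_num
      · have h1 : (1:ℕ) ≤ J - 1 := by omega
        rw [tele (J - 1) h1]
        have : (0:ℝ) < ((J:ℕ) - 1 : ℕ) := by exact_mod_cast (by omega : 0 < J - 1)
        nlinarith [this, one_div_pos.mpr this]
    linarith
  have h4 := gD2
  have : gD J ≤ Real.log J + 8 := by
    calc gD J ≤ fD J * aD J + (∑ j ∈ Icc 2 (J - 1), fD j * (aD j - aD (j + 1))) + gD 2 := hmain
      _ ≤ 4 + (Real.log J + 3) + 1 := by linarith [h2.trans h3]
      _ = Real.log J + 8 := by ring
  exact this

private lemma primes_sum {S : Finset ℕ} (hS : ∀ q ∈ S, q.Prime) (hk : 2 ≤ S.card) :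
    ∑ q ∈ S, 1 / (q:ℝ) ≤ Real.log (Real.log S.card) + 11 := by
  set k := S.card with hkdef
  set l := Nat.log 2 k with hldef
  set J := 2 * (l + 1) with hJdef
  have hl1 : 1 ≤ l := Nat.log_pos (by norm_num) hk
  have hJ2 : 2 ≤ J := by omega
  have hk0 : 0 < k := by omega
  have hkR : (2:ℝ) ≤ (k:ℝ) := by exact_mod_cast hk
  have hlogk : 0 < Real.log k := Real.log_pos (by linarith)
  have hl2 : (0.6931471803:ℝ) < Real.log 2 := Real.log_two_gt_d9
  -- k^2 < 2^J
  have hk2J : k ^ 2 < 2 ^ J := by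
    have h1 : k < 2 ^ (l + 1) := Nat.lt_pow_succ_log_self (by norm_num) k
    calc k ^ 2 < (2 ^ (l + 1)) ^ 2 := Nat.pow_lt_pow_left h1 (by norm_num)
      _ = 2 ^ J := by rw [hJdef, ← pow_mul, mul_comm]
  -- split the sum
  have hsplit := Finset.sum_filter_add_sum_filter_not S (fun q => q ≤ 2 ^ J)
      (fun q => 1 / (q:ℝ))
  have hsmall : ∑ q ∈ S.filter (fun q => q ≤ 2 ^ J), 1 / (q:ℝ)
      ≤ Real.log J + 8 := by
    refine le_trans (Finset.sum_le_sum_of_subset_of_nonneg ?_ ?_) (mertens2 hJ2)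
    · intro q hq
      rw [Finset.mem_filter] at hq
      exact mem_Pr.mpr ⟨hq.2, hS q hq.1⟩
    · intro q _ _
      positivity
  have hbig : ∑ q ∈ S.filter (fun q => ¬ q ≤ 2 ^ J), 1 / (q:ℝ) ≤ 1 := by
    have hterm : ∀ q ∈ S.filter (fun q => ¬ q ≤ 2 ^ J), 1 / (q:ℝ) ≤ 1 / ((k:ℝ) ^ 2) := by
      intro q hq
      rw [Finset.mem_filter] at hq
      have hqk : (k:ℝ) ^ 2 ≤ (q:ℝ) := by
        have : k ^ 2 ≤ q := by omega
        exact_mod_cast this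
      exact one_div_le_one_div_of_le (by positivity) hqk
    calc ∑ q ∈ S.filter (fun q => ¬ q ≤ 2 ^ J), 1 / (q:ℝ)
        ≤ ∑ _q ∈ S.filter (fun q => ¬ q ≤ 2 ^ J), 1 / ((k:ℝ) ^ 2) :=
          Finset.sum_le_sum hterm
      _ = (S.filter (fun q => ¬ q ≤ 2 ^ J)).card * (1 / ((k:ℝ) ^ 2)) := by
          rw [Finset.sum_const, nsmul_eq_mul]
      _ ≤ (k:ℝ) * (1 / ((k:ℝ) ^ 2)) := by
          apply mul_le_mul_of_nonneg_right _ (by positivity)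
          exact_mod_cast Finset.card_le_card (Finset.filter_subset _ S)
      _ = 1 / (k:ℝ) := by field_simp
      _ ≤ 1 := by
          rw [div_le_one (by linarith)]; linarith
  -- bound log J
  have hJk : (J:ℝ) ≤ 6 * Real.log k := by
    have h2l : 2 ^ l ≤ k := Nat.pow_log_le_self 2 (by omega)
    have hllog : (l:ℝ) * Real.log 2 ≤ Real.log k := by
      calc (l:ℝ) * Real.log 2 = Real.log (((2:ℕ) ^ l : ℕ) : ℝ) := by
            push_cast; rw [Real.log_pow]
        _ ≤ Real.log k := Real.log_le_log (by positivity) (by exact_mod_cast h2l)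
    have hlR : (1:ℝ) ≤ (l:ℝ) := by exact_mod_cast hl1
    have hJR : (J:ℝ) = 2 * ((l:ℝ) + 1) := by rw [hJdef]; push_cast; ring
    nlinarith
  have hlogJ : Real.log J ≤ Real.log (Real.log k) + 2 := by
    have hJ0 : (0:ℝ) < (J:ℝ) := by exact_mod_cast lt_of_lt_of_le (by norm_num) hJ2
    calc Real.log J ≤ Real.log (6 * Real.log k) := Real.log_le_log hJ0 hJk
      _ = Real.log 6 + Real.log (Real.log k) := Real.log_mul (by norm_num) (ne_of_gt hlogk)
      _ ≤ 2 + Real.log (Real.log k) := by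
          have h6 : Real.log 6 ≤ 2 := by
            rw [Real.log_le_iff_le_exp (by norm_num)]
            have he := Real.exp_one_gt_d9
            have : Real.exp 2 = Real.exp 1 * Real.exp 1 := by
              rw [← Real.exp_add]; norm_num
            nlinarith
          linarith
      _ = Real.log (Real.log k) + 2 := by ring
  calc ∑ q ∈ S, 1 / (q:ℝ)
      = ∑ q ∈ S.filter (fun q => q ≤ 2 ^ J), 1 / (q:ℝ)
        + ∑ q ∈ S.filter (fun q => ¬ q ≤ 2 ^ J), 1 / (q:ℝ) := hsplit.symm
    _ ≤ (Real.log J + 8) + 1 := add_le_add hsmall hbig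
    _ ≤ Real.log (Real.log k) + 11 := by linarith

/-- There is a universal constant `C > 0` such that for every `n` with
at least two distinct prime factors, `∏_{q ∣ n prime} (1 + 1/q) ≤ C·log(ω(n))`. -/
theorem prod_one_add_inv_prime_le :
    ∃ C : ℝ, 0 < C ∧ ∀ n : ℕ, 2 ≤ n.primeFactors.card →
      ∏ q ∈ n.primeFactors, (1 + 1 / (q : ℝ)) ≤ C * Real.log (n.primeFactors.card) := by
  refine ⟨Real.exp 11, Real.exp_pos 11, ?_⟩
  intro n hn
  set S := n.primeFactors with hSdef
  have hS : ∀ q ∈ S, q.Prime := fun q hq => Nat.prime_of_mem_primeFactors hq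
  have hsum := primes_sum hS hn
  have hlogk : 0 < Real.log S.card := by
    apply Real.log_pos
    exact_mod_cast lt_of_lt_of_le (by norm_num) hn
  have hprod : ∏ q ∈ S, (1 + 1 / (q:ℝ)) ≤ Real.exp (∑ q ∈ S, 1 / (q:ℝ)) := by
    rw [Real.exp_sum]
    apply Finset.prod_le_prod
    · intro q hq
      have : (0:ℝ) < q := by exact_mod_cast (hS q hq).pos
      positivity
    · intro q hq
      have := Real.add_one_le_exp (1 / (q:ℝ))
      linarith
  calc ∏ q ∈ S, (1 + 1 / (q:ℝ)) ≤ Real.exp (∑ q ∈ S, 1 / (q:ℝ)) := hprod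
    _ ≤ Real.exp (Real.log (Real.log S.card) + 11) := Real.exp_le_exp.mpr hsum
    _ = Real.exp 11 * Real.log S.card := by
        rw [Real.exp_add, Real.exp_log hlogk]; ring
end

section
/- Let g : ℝ → ℂ be a Schwartz function with Fourier transform ĝ. Then there exists a constant C > 0 such that for all real L ≥ 1, |(1/L)·∫_0^∞ (ĝ(0) − ĝ(y/L))/sinh(y/2) dy| ≤ C/L². -/
open MeasureTheory

lemma div_sinh_bound {y : ℝ} (hy : 0 < y) :
    y / Real.sinh (y / 2) ≤ 8 * Real.exp (-(y / 4)) := by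
  have hs : 0 < Real.sinh (y / 2) := Real.sinh_pos_iff.2 (by linarith)
  rw [div_le_iff₀ hs]
  have h1 : y / 4 + 1 ≤ Real.exp (y / 4) := Real.add_one_le_exp _
  have h2 : Real.exp (-(3 * y / 4)) ≤ 1 := Real.exp_le_one_iff.2 (by linarith)
  have e1 : Real.exp (-(y / 4)) * Real.exp (y / 2) = Real.exp (y / 4) := by
    rw [← Real.exp_add]; ring_nf
  have e2 : Real.exp (-(y / 4)) * Real.exp (-(y / 2)) = Real.exp (-(3 * y / 4)) := by
    rw [← Real.exp_add]; ring_nf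
  rw [Real.sinh_eq]
  nlinarith [Real.exp_pos (-(y/4))]

/-- For a Schwartz function `g : ℝ → ℂ` there is `C > 0` such that for
all `L ≥ 1`, `|(1/L)·∫_0^∞ (ĝ(0) − ĝ(y/L))/sinh(y/2) dy| ≤ C/L²`. -/
theorem gamma_term_estimate (g : SchwartzMap ℝ ℂ) :
    ∃ C : ℝ, 0 < C ∧ ∀ L : ℝ, 1 ≤ L →
      ‖(1 / (L : ℂ)) * ∫ y in Set.Ioi (0 : ℝ),
          (FourierTransform.fourier (g : ℝ → ℂ) 0 - FourierTransform.fourier (g : ℝ → ℂ) (y / L)) /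
            ((Real.sinh (y / 2) : ℝ) : ℂ)‖ ≤ C / L ^ 2 := by
  set gh : SchwartzMap ℝ ℂ := SchwartzMap.fourierTransformCLM ℂ g with hgh
  have hco : FourierTransform.fourier (g : ℝ → ℂ) = gh := rfl
  -- Lipschitz bound for gh
  obtain ⟨M, hM0, hM⟩ := (SchwartzMap.derivCLM ℂ ℂ gh).decay 0 0
  have hMb : ∀ x : ℝ, ‖deriv (gh : ℝ → ℂ) x‖ ≤ M := by
    intro x
    have := hM x
    simpa [SchwartzMap.derivCLM_apply, norm_iteratedFDeriv_zero] using this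
  have hLip : ∀ t : ℝ, ‖(gh : ℝ → ℂ) 0 - (gh : ℝ → ℂ) t‖ ≤ M * |t| := by
    intro t
    have := convex_univ.norm_image_sub_le_of_norm_deriv_le
      (f := (gh : ℝ → ℂ)) (fun x _ => (gh.differentiable).differentiableAt)
      (fun x _ => hMb x) (Set.mem_univ t) (Set.mem_univ 0)
    simpa using this
  -- the integral of the exponential majorant
  have hexpInt : IntegrableOn (fun y : ℝ => Real.exp (-(y / 4))) (Set.Ioi 0) := by
    have := exp_neg_integrableOn_Ioi 0 (b := (1:ℝ)/4) (by norm_num)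
    refine this.congr_fun (fun y _ => by ring_nf) measurableSet_Ioi
  set I : ℝ := ∫ y in Set.Ioi (0:ℝ), Real.exp (-(y / 4))
  have hI0 : 0 ≤ I := integral_nonneg fun y => (Real.exp_pos _).le
  refine ⟨8 * M * (I + 1) + 1, by positivity, fun L hL => ?_⟩
  have hL0 : (0:ℝ) < L := lt_of_lt_of_le one_pos hL
  rw [norm_mul]
  have hbound : ‖∫ y in Set.Ioi (0 : ℝ),
      (FourierTransform.fourier (g : ℝ → ℂ) 0 - FourierTransform.fourier (g : ℝ → ℂ) (y / L)) /
        ((Real.sinh (y / 2) : ℝ) : ℂ)‖ ≤ ∫ y in Set.Ioi (0:ℝ), 8 * M / L * Real.exp (-(y / 4)) := by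
    apply norm_integral_le_of_norm_le (hexpInt.const_mul _)
    filter_upwards [self_mem_ae_restrict measurableSet_Ioi] with y hy
    have hy0 : (0:ℝ) < y := hy
    have hs : 0 < Real.sinh (y / 2) := Real.sinh_pos_iff.2 (by linarith)
    rw [hco, norm_div]
    have h1 : ‖(gh : ℝ → ℂ) 0 - (gh : ℝ → ℂ) (y / L)‖ ≤ M * (y / L) := by
      have := hLip (y / L)
      rwa [abs_of_pos (by positivity)] at this
    have h2 : ‖((Real.sinh (y / 2) : ℝ) : ℂ)‖ = Real.sinh (y / 2) := by
      rw [Complex.norm_real, Real.norm_eq_abs, abs_of_pos hs]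
    rw [h2]
    have h3 : M * (y / L) / Real.sinh (y / 2) ≤ 8 * M / L * Real.exp (-(y / 4)) := by
      have h4 : y / Real.sinh (y / 2) ≤ 8 * Real.exp (-(y / 4)) := div_sinh_bound hy0
      have : M * (y / L) / Real.sinh (y / 2) = (M / L) * (y / Real.sinh (y / 2)) := by
        field_simp
      rw [this]
      calc M / L * (y / Real.sinh (y / 2)) ≤ M / L * (8 * Real.exp (-(y / 4))) := by
            apply mul_le_mul_of_nonneg_left h4 (by positivity)
        _ = 8 * M / L * Real.exp (-(y / 4)) := by ring
    exact le_trans (div_le_div_of_nonneg_right h1 hs.le) h3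
  have hIval : (∫ y in Set.Ioi (0:ℝ), 8 * M / L * Real.exp (-(y / 4))) = 8 * M / L * I := by
    rw [integral_const_mul]
  rw [hIval] at hbound
  have hnorm1 : ‖(1 / (L:ℂ))‖ = 1 / L := by
    rw [norm_div, norm_one, Complex.norm_real]
    · simp [Real.norm_eq_abs, abs_of_pos hL0]
  rw [hnorm1]
  calc 1 / L * ‖∫ y in Set.Ioi (0 : ℝ),
      (FourierTransform.fourier (g : ℝ → ℂ) 0 - FourierTransform.fourier (g : ℝ → ℂ) (y / L)) /
        ((Real.sinh (y / 2) : ℝ) : ℂ)‖ ≤ 1 / L * (8 * M / L * I) := by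
        apply mul_le_mul_of_nonneg_left hbound (by positivity)
    _ ≤ (8 * M * (I + 1) + 1) / L ^ 2 := by
        have h : (1:ℝ) / L * (8 * M / L * I) = 8 * M * I / L ^ 2 := by
          field_simp
        rw [h]
        gcongr
        nlinarith
end

section
/- The series ∑_p log(p)/(p² − 1), summed over all primes p, converges and equals −ζ'(2)/ζ(2), where ζ is the Riemann zeta function and ζ' its derivative. -/
set_option maxHeartbeats 1000000

open ArithmeticFunction Complex
open scoped LSeries.notation

private lemma aux_inner (p : Nat.Primes) :
    HasSum (fun k : ℕ => LSeries.term ↗Λ 2 ((p : ℕ) ^ (k + 1)))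
      ((Real.log (p : ℕ) : ℂ) / (((p : ℕ) : ℂ) ^ 2 - 1)) := by
  have hp : (p : ℕ).Prime := p.prop
  have hp1 : (1 : ℝ) < (p : ℕ) := by exact_mod_cast hp.one_lt
  have hterm : ∀ k : ℕ, LSeries.term ↗Λ 2 ((p : ℕ) ^ (k + 1)) =
      (Real.log (p : ℕ) : ℂ) * ((((p : ℕ) : ℂ) ^ 2)⁻¹) ^ (k + 1) := by
    intro k
    rw [LSeries.term_def]
    rw [if_neg (pow_ne_zero _ hp.ne_zero)]
    rw [vonMangoldt_apply_pow (Nat.succ_ne_zero k), vonMangoldt_apply_prime hp]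
    push_cast
    rw [show (2 : ℂ) = ((2 : ℕ) : ℂ) by norm_num, cpow_natCast]
    rw [div_eq_mul_inv]
    ring
  have hx : ‖(((p : ℕ) : ℂ) ^ 2)⁻¹‖ < 1 := by
    rw [norm_inv, norm_pow]
    simp only [Complex.norm_natCast]
    rw [inv_lt_one_iff₀]
    right
    nlinarith
  have hgeo : HasSum (fun k : ℕ => ((((p : ℕ) : ℂ) ^ 2)⁻¹) ^ (k + 1))
      ((((p : ℕ) : ℂ) ^ 2)⁻¹ * (1 - (((p : ℕ) : ℂ) ^ 2)⁻¹)⁻¹) := by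
    have h := (hasSum_geometric_of_norm_lt_one hx).mul_left ((((p : ℕ) : ℂ) ^ 2)⁻¹)
    have hfun : (fun k : ℕ => ((((p : ℕ) : ℂ) ^ 2)⁻¹) ^ (k + 1))
        = fun k : ℕ => (((p : ℕ) : ℂ) ^ 2)⁻¹ * ((((p : ℕ) : ℂ) ^ 2)⁻¹) ^ k := by
      funext k
      rw [pow_succ']
    rw [hfun]
    exact h
  have hne : (((p : ℕ) : ℂ) ^ 2) ≠ 0 := by
    exact pow_ne_zero _ (Nat.cast_ne_zero.mpr hp.ne_zero)
  have hval : (((p : ℕ) : ℂ) ^ 2)⁻¹ * (1 - (((p : ℕ) : ℂ) ^ 2)⁻¹)⁻¹ =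
      (((p : ℕ) : ℂ) ^ 2 - 1)⁻¹ := by
    rw [← mul_inv]
    congr 1
    rw [mul_sub, mul_one, mul_inv_cancel₀ hne]
  have := (hgeo.mul_left ((Real.log (p : ℕ) : ℂ)))
  rw [hval] at this
  simpa [hterm, div_eq_mul_inv] using this

/-- `∑_p log p/(p² − 1) = −ζ'(2)/ζ(2)`, the sum (over all primes)
converging. -/
theorem hasSum_log_div_sq_sub_one :
    HasSum (fun p : Nat.Primes => (Real.log (p : ℕ) : ℂ) / (((p : ℕ) : ℂ) ^ 2 - 1))
      (-(deriv riemannZeta 2 / riemannZeta 2)) := by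
  have h2 : (1 : ℝ) < (2 : ℂ).re := by norm_num
  have hsum : LSeriesSummable ↗Λ 2 := LSeriesSummable_vonMangoldt h2
  have hL : LSeries ↗Λ 2 = - deriv riemannZeta 2 / riemannZeta 2 :=
    LSeries_vonMangoldt_eq_deriv_riemannZeta_div h2
  have hf : HasSum (LSeries.term ↗Λ 2) (-(deriv riemannZeta 2 / riemannZeta 2)) := by
    have := hsum.hasSum
    rwa [show ∑' n, LSeries.term ↗Λ 2 n = -(deriv riemannZeta 2 / riemannZeta 2) from
      hL.trans (by ring)] at this
  -- transfer to the product Primes × ℕ via the injection (p,k) ↦ p^(k+1)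
  set e : Nat.Primes × ℕ → ℕ := fun pk => (pk.1 : ℕ) ^ (pk.2 + 1) with he
  have hinj : Function.Injective e := by
    have : e = Subtype.val ∘ Nat.Primes.prodNatEquiv := by
      funext pk
      obtain ⟨p, k⟩ := pk
      rfl
    rw [this]
    exact Subtype.val_injective.comp Nat.Primes.prodNatEquiv.injective
  have hrange : ∀ n ∉ Set.range e, LSeries.term ↗Λ 2 n = 0 := by
    intro n hn
    rcases eq_or_ne n 0 with rfl | hn0
    · simp [LSeries.term]
    rw [LSeries.term_def, if_neg hn0]
    have : ¬ IsPrimePow n := by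
      intro hpp
      obtain ⟨p, k, hp, hk, rfl⟩ := hpp
      exact hn ⟨(⟨p, Nat.prime_iff.mpr hp⟩, k - 1), by
        simp [he, Nat.sub_add_cancel hk]⟩
    simp [vonMangoldt_eq_zero_iff.mpr this]
  have hprod : HasSum (fun pk : Nat.Primes × ℕ => LSeries.term ↗Λ 2 (e pk))
      (-(deriv riemannZeta 2 / riemannZeta 2)) :=
    (hinj.hasSum_iff hrange).mpr hf
  exact hprod.prod_fiberwise fun p => aux_inner p
end
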